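/- arXiv:1010.3267 — 5 statements merged into one kernel-verified Lean document; each statement's English description precedes it below -/
import Mathlib

section
/- Let f : (0,∞) → (0,∞) be a twice differentiable probability density function (∫₀^∞ f(t) dt = 1), with logarithmic derivative ω(x) = f′(x)/f(x), survival function F̄(x) = ∫ₓ^∞ f(t) dt, and Mills ratio m(x) = F̄(x)/f(x). If f(x)/ω(x) → 0 as x → ∞, the function x ↦ ω′(x)/ω(x)² is decreasing on (0,∞), and the function x ↦ x³ω′(x)/(xω(x)² − xω′(x) − 2ω(x)) is increasing on (0,∞), then m is reciprocally convex on (0,∞), i.e., m is concave on (0,∞) and x ↦ m(1/x) is convex on (0,∞). -/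
open MeasureTheory Set Filter Topology intervalIntegral

set_option maxHeartbeats 2000000

/-- **Theorem 2(a), reciprocal convexity.** Let `f : (0,∞) → (0,∞)` be a twice
differentiable probability density with logarithmic derivative `ω = f′/f`, survival
function `F̄(x) = ∫ₓ^∞ f`, and Mills ratio `m = F̄/f`. If `f/ω → 0` at `∞`,
`ω′/ω²` is decreasing on `(0,∞)`, and `x ↦ x³ω′(x)/(xω(x)² − xω′(x) − 2ω(x))` is
increasing on `(0,∞)`, then `m` is reciprocally convex on `(0,∞)`: `m` is concave
on `(0,∞)` and `x ↦ m(1/x)` is convex on `(0,∞)`. -/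
theorem millsRatio_reciprocally_convex (f ω Fbar m : ℝ → ℝ)
    (hf_pos : ∀ x ∈ Set.Ioi (0 : ℝ), 0 < f x)
    (hf_diff : ∀ x ∈ Set.Ioi (0 : ℝ), DifferentiableAt ℝ f x)
    (hf_diff2 : ∀ x ∈ Set.Ioi (0 : ℝ), DifferentiableAt ℝ (deriv f) x)
    (hf_pdf : ∫ t in Set.Ioi (0 : ℝ), f t = 1)
    (hω : ∀ x, ω x = deriv f x / f x)
    (hFbar : ∀ x, Fbar x = ∫ t in Set.Ioi x, f t)
    (hm : ∀ x, m x = Fbar x / f x)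
    (hlim : Filter.Tendsto (fun x => f x / ω x) Filter.atTop (nhds 0))
    (hdec : AntitoneOn (fun x => deriv ω x / (ω x) ^ 2) (Set.Ioi 0))
    (hinc : MonotoneOn
      (fun x => x ^ 3 * deriv ω x / (x * (ω x) ^ 2 - x * deriv ω x - 2 * ω x))
      (Set.Ioi 0)) :
    ConcaveOn ℝ (Set.Ioi 0) m ∧ ConvexOn ℝ (Set.Ioi 0) (fun x : ℝ => m (1 / x)) := by
  -- abbreviations
  set g : ℝ → ℝ := fun x => deriv ω x / (ω x) ^ 2 with hgdef
  set q : ℝ → ℝ := fun x => x ^ 3 * deriv ω x / (x * (ω x) ^ 2 - x * deriv ω x - 2 * ω x)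
    with hqdef
  have hfne : ∀ x ∈ Set.Ioi (0 : ℝ), f x ≠ 0 := fun x hx => (hf_pos x hx).ne'
  have hf_contOn : ContinuousOn f (Set.Ioi 0) :=
    fun x hx => (hf_diff x hx).continuousAt.continuousWithinAt
  have hderivf : ∀ x ∈ Set.Ioi (0 : ℝ), deriv f x = ω x * f x := by
    intro x hx
    rw [hω x, div_mul_cancel₀ _ (hfne x hx)]
  have hω_diffAt : ∀ x ∈ Set.Ioi (0 : ℝ), DifferentiableAt ℝ ω x := by
    intro x hx
    have hfun : (fun y => deriv f y / f y) = ω := funext fun y => (hω y).symm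
    rw [← hfun]
    exact (hf_diff2 x hx).div (hf_diff x hx) (hfne x hx)
  have hω_deriv : ∀ x ∈ Set.Ioi (0 : ℝ), HasDerivAt ω (deriv ω x) x :=
    fun x hx => (hω_diffAt x hx).hasDerivAt
  have hω_contOn : ContinuousOn ω (Set.Ioi 0) :=
    fun x hx => (hω_diffAt x hx).continuousAt.continuousWithinAt
  -- integrability
  have hf_int : MeasureTheory.IntegrableOn f (Set.Ioi (0:ℝ)) := by
    by_contra hcon
    rw [MeasureTheory.integral_undef hcon] at hf_pdf
    norm_num at hf_pdf
  have hf_int' : ∀ y : ℝ, 0 < y → MeasureTheory.IntegrableOn f (Set.Ioi y) :=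
    fun y hy => hf_int.mono_set (Set.Ioi_subset_Ioi hy.le)
  have hsub_uIcc : ∀ a b : ℝ, 0 < a → 0 < b → Set.uIcc a b ⊆ Set.Ioi 0 := by
    intro a b ha hb x hx
    rcases Set.mem_uIcc.mp hx with ⟨h1, _⟩ | ⟨h1, _⟩ <;> [exact lt_of_lt_of_le ha h1;
      exact lt_of_lt_of_le hb h1]
  have hf_ii : ∀ a b : ℝ, 0 < a → 0 < b → IntervalIntegrable f MeasureTheory.volume a b := by
    intro a b ha hb
    exact (hf_int.mono_set (hsub_uIcc a b ha hb)).intervalIntegrable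
  -- survival function facts
  have hFbar_sub : ∀ y T : ℝ, 0 < y → y ≤ T → Fbar y - Fbar T = ∫ t in y..T, f t := by
    intro y T hy hyT
    have hT : 0 < T := lt_of_lt_of_le hy hyT
    have hdisj : Disjoint (Set.Ioc y T) (Set.Ioi T) := by
      rw [Set.disjoint_left]
      rintro t ⟨_, h1⟩ h2
      exact absurd h1 (not_le.mpr h2)
    have hIocInt : MeasureTheory.IntegrableOn f (Set.Ioc y T) :=
      hf_int.mono_set (fun t ht => lt_of_lt_of_le hy ht.1.le)
    have hsplit : (∫ t in Set.Ioi y, f t) = (∫ t in Set.Ioc y T, f t) + ∫ t in Set.Ioi T, f t := by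
      rw [← MeasureTheory.setIntegral_union hdisj measurableSet_Ioi hIocInt (hf_int' T hT),
        Set.Ioc_union_Ioi_eq_Ioi hyT]
    rw [hFbar y, hFbar T, intervalIntegral.integral_of_le hyT, hsplit]
    ring
  have hFbar_nonneg : ∀ y : ℝ, 0 < y → 0 ≤ Fbar y := by
    intro y hy
    rw [hFbar y]
    exact MeasureTheory.setIntegral_nonneg measurableSet_Ioi
      (fun t ht => (hf_pos t (lt_trans hy ht)).le)
  have hFbar_tendsto : Filter.Tendsto Fbar Filter.atTop (nhds 0) := by
    have h1 : Filter.Tendsto (fun T => ∫ t in (1:ℝ)..T, f t) Filter.atTop (nhds (Fbar 1)) := by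
      rw [hFbar 1]
      exact MeasureTheory.intervalIntegral_tendsto_integral_Ioi 1 (hf_int' 1 one_pos) tendsto_id
    have h2 : Filter.Tendsto (fun T => Fbar 1 - ∫ t in (1:ℝ)..T, f t) Filter.atTop
        (nhds (Fbar 1 - Fbar 1)) := tendsto_const_nhds.sub h1
    rw [sub_self] at h2
    apply h2.congr'
    filter_upwards [Filter.eventually_ge_atTop (1:ℝ)] with T hT
    have := hFbar_sub 1 T one_pos hT
    linarith
  have hFbar_pos : ∀ y : ℝ, 0 < y → 0 < Fbar y := by
    intro y hy
    have h2 : 0 < ∫ t in y..(y+1), f t := by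
      apply intervalIntegral.intervalIntegral_pos_of_pos_on (hf_ii y (y+1) hy (by linarith))
      · intro t ht
        exact hf_pos t (lt_trans hy ht.1)
      · linarith
    have h3 := hFbar_sub y (y+1) hy (by linarith)
    have h4 : 0 ≤ Fbar (y+1) := hFbar_nonneg _ (by linarith)
    linarith
  have hFbar_deriv : ∀ x : ℝ, 0 < x → HasDerivAt Fbar (-f x) x := by
    intro x hx
    have ha : 0 < x/2 := by linarith
    have hint : HasDerivAt (fun t => ∫ s in (x/2)..t, f s) (f x) x :=
      intervalIntegral.integral_hasDerivAt_right (hf_ii (x/2) x ha hx)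
        (hf_contOn.stronglyMeasurableAtFilter isOpen_Ioi x hx)
        (hf_contOn.continuousAt (isOpen_Ioi.mem_nhds hx))
    have hmain : HasDerivAt (fun t => Fbar (x/2) - ∫ s in (x/2)..t, f s) (-f x) x := by
      exact hint.const_sub (Fbar (x/2))
    apply hmain.congr_of_eventuallyEq
    filter_upwards [isOpen_Ioi.mem_nhds hx] with t ht
    rcases le_total (x/2) t with h | h
    · have := hFbar_sub (x/2) t ha h
      linarith
    · have := hFbar_sub t (x/2) ht h
      rw [intervalIntegral.integral_symm]
      linarith
  -- step: no tail lower bound possible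
  have hgrow : ∀ x₀ c : ℝ, 0 < x₀ → 0 < c → (∀ t, x₀ ≤ t → c ≤ f t) → False := by
    intro x₀ c hx₀ hc hb
    set T := x₀ + (Fbar x₀ + 1)/c with hT
    have hq1 : 0 < (Fbar x₀ + 1)/c := div_pos (by linarith [hFbar_nonneg x₀ hx₀]) hc
    have hT' : x₀ ≤ T := by rw [hT]; linarith
    have h1 : Fbar x₀ - Fbar T = ∫ t in x₀..T, f t := hFbar_sub _ _ hx₀ hT'
    have h2 : (∫ _t in x₀..T, c) ≤ ∫ t in x₀..T, f t := by
      apply intervalIntegral.integral_mono_on hT' intervalIntegrable_const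
        (hf_ii _ _ hx₀ (by linarith))
      intro t ht
      exact hb t ht.1
    rw [intervalIntegral.integral_const, smul_eq_mul] at h2
    have h3 : 0 ≤ Fbar T := hFbar_nonneg T (by linarith)
    have h4 : (T - x₀) * c = Fbar x₀ + 1 := by
      rw [hT]
      field_simp
      ring
    linarith
  -- ω is nonpositive on (0, ∞)
  have hω_nonpos : ∀ x : ℝ, 0 < x → ω x ≤ 0 := by
    intro x₀ hx₀
    by_contra hpos
    push_neg at hpos
    by_cases hall : ∀ t, x₀ ≤ t → 0 < ω t
    · -- then f is increasing hence not integrable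
      have hmono : MonotoneOn f (Set.Ici x₀) := by
        apply monotoneOn_of_deriv_nonneg (convex_Ici x₀)
        · exact hf_contOn.mono (fun t ht => lt_of_lt_of_le hx₀ ht)
        · intro t ht
          rw [interior_Ici] at ht
          exact (hf_diff t (Set.mem_Ioi.mpr (lt_trans hx₀ ht))).differentiableWithinAt
        · intro t ht
          rw [interior_Ici] at ht
          have ht0 : (0:ℝ) < t := lt_trans hx₀ ht
          rw [hderivf t ht0]
          exact mul_nonneg (hall t ht.le).le (hf_pos t ht0).le
      exact hgrow x₀ (f x₀) hx₀ (hf_pos x₀ hx₀)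
        (fun t ht => hmono (Set.self_mem_Ici) ht ht)
    · push_neg at hall
      obtain ⟨t₁, ht₁, ht₁'⟩ := hall
      -- first zero of ω after x₀
      set K := {t | t ∈ Set.Icc x₀ t₁ ∧ ω t ≤ 0} with hK
      have hKne : K.Nonempty := ⟨t₁, ⟨⟨ht₁, le_rfl⟩, ht₁'⟩⟩
      have hKsub : K ⊆ Set.Icc x₀ t₁ := fun t ht => ht.1
      have hKclosed : IsClosed K := by
        have : K = Set.Icc x₀ t₁ ∩ ω ⁻¹' Set.Iic 0 := by
          ext t; simp [hK, Set.mem_Icc, and_comm]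
        rw [this]
        exact ContinuousOn.preimage_isClosed_of_isClosed
          (hω_contOn.mono (fun t ht => lt_of_lt_of_le hx₀ ht.1)) isClosed_Icc isClosed_Iic
      have hbdd : BddBelow K := ⟨x₀, fun t ht => ht.1.1⟩
      set t₀ := sInf K with ht₀def
      have ht₀K : t₀ ∈ K := hKclosed.csInf_mem hKne hbdd
      have ht₀pos : 0 < t₀ := lt_of_lt_of_le hx₀ ht₀K.1.1
      have ht₀x₀ : x₀ < t₀ := by
        rcases lt_or_eq_of_le ht₀K.1.1 with h | h
        · exact h
        · exfalso; rw [← h] at ht₀K; linarith [ht₀K.2]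
      have hpos_before : ∀ s, x₀ ≤ s → s < t₀ → 0 < ω s := by
        intro s hs hst
        by_contra hns
        push_neg at hns
        have : t₀ ≤ s := csInf_le hbdd ⟨⟨hs, le_trans hst.le ht₀K.1.2⟩, hns⟩
        linarith
      have hωt₀0 : ω t₀ = 0 := by
        refine le_antisymm ht₀K.2 ?_
        have hcont : Filter.Tendsto ω (nhdsWithin t₀ (Set.Iio t₀)) (nhds (ω t₀)) :=
          ((hω_diffAt t₀ ht₀pos).continuousAt.tendsto).mono_left nhdsWithin_le_nhds
        apply ge_of_tendsto hcont
        filter_upwards [Ico_mem_nhdsLT ht₀x₀] with s hs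
        exact (hpos_before s hs.1 hs.2).le
      have hgt₀ : g t₀ = 0 := by simp [hgdef, hωt₀0]
      have hstep : ∀ s, s ∈ Set.Ioo x₀ t₀ → 0 ≤ deriv ω s := by
        intro s hs
        have hs0 : 0 < s := lt_trans hx₀ hs.1
        have hgs : g t₀ ≤ g s :=
          hdec (Set.mem_Ioi.mpr hs0) (Set.mem_Ioi.mpr ht₀pos) hs.2.le
        rw [hgt₀] at hgs
        have hω2 : (0:ℝ) < (ω s)^2 := pow_pos (hpos_before s hs.1.le hs.2) 2
        have := mul_nonneg hgs hω2.le
        rwa [hgdef, div_mul_cancel₀] at this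
        exact hω2.ne'
      have hmono : MonotoneOn ω (Set.Icc x₀ t₀) := by
        apply monotoneOn_of_deriv_nonneg (convex_Icc _ _)
        · exact hω_contOn.mono (fun t ht => lt_of_lt_of_le hx₀ ht.1)
        · intro t ht
          rw [interior_Icc] at ht
          exact (hω_diffAt t (Set.mem_Ioi.mpr (lt_trans hx₀ ht.1))).differentiableWithinAt
        · intro t ht
          rw [interior_Icc] at ht
          exact hstep t ht
      have := hmono (Set.mem_Icc.mpr ⟨le_rfl, ht₀x₀.le⟩)
        (Set.mem_Icc.mpr ⟨ht₀x₀.le, le_rfl⟩) ht₀x₀.le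
      rw [hωt₀0] at this
      linarith
  -- at a zero of ω the derivative vanishes
  have hω_zero_deriv : ∀ b : ℝ, 0 < b → ω b = 0 → deriv ω b = 0 := by
    intro b hb hωb
    apply IsLocalMax.deriv_eq_zero
    show ∀ᶠ t in nhds b, ω t ≤ ω b
    filter_upwards [isOpen_Ioi.mem_nhds hb] with t ht
    rw [hωb]
    exact hω_nonpos t ht
  -- ω is strictly negative on (0, ∞)
  have hω_neg : ∀ x : ℝ, 0 < x → ω x < 0 := by
    intro x hx
    rcases (hω_nonpos x hx).lt_or_eq with h | hzeq
    · exact h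
    exfalso
    -- deriv ω vanishes beyond x
    have hD0 : ∀ t, x < t → deriv ω t = 0 := by
      intro t hxt
      have ht0 : 0 < t := lt_trans hx hxt
      rcases (hω_nonpos t ht0).lt_or_eq with hneg | hzero
      · have hgx : g x = 0 := by simp [hgdef, hzeq]
        have hgt : g t ≤ 0 := by
          have := hdec (Set.mem_Ioi.mpr hx) (Set.mem_Ioi.mpr ht0) hxt.le
          rwa [hgx] at this
        have hω2 : (0:ℝ) < (ω t)^2 := pow_two_pos_of_ne_zero hneg.ne
        have hd_le : deriv ω t ≤ 0 := by
          have := mul_nonpos_of_nonpos_of_nonneg hgt hω2.le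
          rwa [hgdef, div_mul_cancel₀] at this
          exact hω2.ne'
        have hDpos : 0 < t * (ω t)^2 - t * deriv ω t - 2 * ω t := by
          nlinarith
        have hqx : q x = 0 := by
          have hd0 : deriv ω x = 0 := hω_zero_deriv x hx hzeq
          simp [hqdef, hd0]
        have hq_le : q x ≤ q t := hinc (Set.mem_Ioi.mpr hx) (Set.mem_Ioi.mpr ht0) hxt.le
        rw [hqx] at hq_le
        have hqt : q t * (t * (ω t)^2 - t * deriv ω t - 2 * ω t) = t^3 * deriv ω t := by
          simp only [hqdef]
          exact div_mul_cancel₀ _ hDpos.ne'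
        have hd_ge : 0 ≤ deriv ω t := by
          nlinarith [mul_nonneg hq_le hDpos.le, pow_pos ht0 3]
        linarith
      · exact hω_zero_deriv t ht0 hzero
    -- ω is constant on (x, ∞)
    have hconst : ∀ t, x < t → ω t = ω (x+1) := by
      have hmono : MonotoneOn ω (Set.Ioi x) := by
        apply monotoneOn_of_deriv_nonneg (convex_Ioi x)
        · exact hω_contOn.mono (fun t ht => lt_trans hx ht)
        · intro t ht
          rw [interior_Ioi] at ht
          exact (hω_diffAt t (Set.mem_Ioi.mpr (lt_trans hx ht))).differentiableWithinAt
        · intro t ht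
          rw [interior_Ioi] at ht
          rw [hD0 t ht]
      have hanti : AntitoneOn ω (Set.Ioi x) := by
        apply antitoneOn_of_deriv_nonpos (convex_Ioi x)
        · exact hω_contOn.mono (fun t ht => lt_trans hx ht)
        · intro t ht
          rw [interior_Ioi] at ht
          exact (hω_diffAt t (Set.mem_Ioi.mpr (lt_trans hx ht))).differentiableWithinAt
        · intro t ht
          rw [interior_Ioi] at ht
          rw [hD0 t ht]
      intro t hxt
      have h1 : t ∈ Set.Ioi x := hxt
      have h2 : x + 1 ∈ Set.Ioi x := by simp
      rcases le_total t (x+1) with h | h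
      · exact le_antisymm (hmono h1 h2 h) (hanti h1 h2 h)
      · exact le_antisymm (hanti h2 h1 h) (hmono h2 h1 h)
    rcases (hω_nonpos (x+1) (by linarith)).lt_or_eq with hk | hk
    · -- ω (x+1) < 0 contradicts continuity at x
      have htend : Filter.Tendsto ω (nhdsWithin x (Set.Ioi x)) (nhds (ω x)) :=
        ((hω_diffAt x (Set.mem_Ioi.mpr hx)).continuousAt.tendsto).mono_left nhdsWithin_le_nhds
      have htend2 : Filter.Tendsto ω (nhdsWithin x (Set.Ioi x)) (nhds (ω (x+1))) := by
        apply Filter.Tendsto.congr' _ tendsto_const_nhds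
        filter_upwards [self_mem_nhdsWithin] with s hs
        exact (hconst s hs).symm
      have := tendsto_nhds_unique htend htend2
      rw [hzeq] at this
      linarith [this]
    · -- ω ≡ 0 beyond x, so f is eventually constant: contradiction with integrability
      have hfderiv0 : ∀ t, x < t → deriv f t = 0 := by
        intro t hxt
        have ht0 : 0 < t := lt_trans hx hxt
        rw [hderivf t ht0, hconst t hxt, hk, zero_mul]
      have hfconst : ∀ t, x + 1 ≤ t → f (x+1) ≤ f t := by
        have hmono : MonotoneOn f (Set.Ioi x) := by
          apply monotoneOn_of_deriv_nonneg (convex_Ioi x)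
          · exact hf_contOn.mono (fun t ht => lt_trans hx ht)
          · intro t ht
            rw [interior_Ioi] at ht
            exact (hf_diff t (Set.mem_Ioi.mpr (lt_trans hx ht))).differentiableWithinAt
          · intro t ht
            rw [interior_Ioi] at ht
            rw [hfderiv0 t ht]
        intro t ht
        exact hmono (by simp) (by simp only [Set.mem_Ioi]; linarith) ht
      exact hgrow (x+1) (f (x+1)) (by linarith) (hf_pos (x+1) (Set.mem_Ioi.mpr (by linarith))) hfconst
  -- derivative helpers
  have hωne : ∀ t : ℝ, 0 < t → ω t ≠ 0 := fun t ht => (hω_neg t ht).ne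
  have hω2pos : ∀ t : ℝ, 0 < t → (0:ℝ) < (ω t)^2 :=
    fun t ht => pow_two_pos_of_ne_zero (hωne t ht)
  have hphi_deriv : ∀ t : ℝ, 0 < t → HasDerivAt (fun s => -(ω s)⁻¹) (g t) t := by
    intro t ht
    have h1 := ((hω_deriv t (Set.mem_Ioi.mpr ht)).inv (hωne t ht)).neg
    refine h1.congr_deriv ?_
    rw [hgdef]
    field_simp
  have hphi_pos : ∀ t : ℝ, 0 < t → 0 < -(ω t)⁻¹ := by
    intro t ht
    rw [neg_pos]
    exact inv_lt_zero.mpr (hω_neg t ht)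
  have hphi_ge : ∀ t : ℝ, 0 < t → 0 < deriv ω t → t * g t ≤ -(ω t)⁻¹ := by
    intro t ht hd
    have hgt : 0 < g t := by rw [hgdef]; exact div_pos hd (hω2pos t ht)
    by_contra hlt
    push_neg at hlt
    have hφt := hphi_pos t ht
    set ε := (t * g t - -(ω t)⁻¹) / (2 * g t) with hεdef
    have hε_pos : 0 < ε := div_pos (by linarith) (by linarith)
    have hε_lt : ε < t := by
      rw [hεdef, div_lt_iff₀ (by linarith)]
      nlinarith
    obtain ⟨c, hc, hslope⟩ := exists_hasDerivAt_eq_slope (fun s => -(ω s)⁻¹) g hε_lt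
      (fun s hs => (hphi_deriv s (lt_of_lt_of_le hε_pos hs.1)).continuousAt.continuousWithinAt)
      (fun s hs => hphi_deriv s (lt_trans hε_pos hs.1))
    have hgc : g t ≤ g c := hdec (Set.mem_Ioi.mpr (lt_trans hε_pos hc.1))
      (Set.mem_Ioi.mpr ht) hc.2.le
    have h5 : -(ω t)⁻¹ - -(ω ε)⁻¹ = g c * (t - ε) := by
      rw [hslope, div_mul_cancel₀ _ (sub_ne_zero.mpr (ne_of_gt hε_lt))]
    have h6 : g t * ε = (t * g t - -(ω t)⁻¹) / 2 := by
      rw [hεdef]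
      field_simp
    nlinarith [hphi_pos ε hε_pos,
      mul_le_mul_of_nonneg_right hgc (by linarith : (0:ℝ) ≤ t - ε)]
  have hD_pos : ∀ t : ℝ, 0 < t → 0 < t * (ω t)^2 - t * deriv ω t - 2 * ω t := by
    intro t ht
    rcases le_or_gt (deriv ω t) 0 with hd | hd
    · nlinarith [hω_neg t ht, hω2pos t ht, mul_nonneg ht.le (neg_nonneg.mpr hd)]
    · have h1 := hphi_ge t ht hd
      have hgt : 0 < g t := by rw [hgdef]; exact div_pos hd (hω2pos t ht)
      have hgeq : deriv ω t = g t * (ω t)^2 := by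
        simp only [hgdef]
        exact (div_mul_cancel₀ _ (hω2pos t ht).ne').symm
      have key : t * (ω t)^2 - t * deriv ω t - 2 * ω t
          = (ω t)^2 * (t - t * g t + 2 * -(ω t)⁻¹) := by
        have hinv : (ω t)^2 * (ω t)⁻¹ = ω t := by
          rw [sq]
          exact mul_inv_cancel_right₀ (hωne t ht) (ω t)
        linear_combination (-t) * hgeq + 2 * hinv
      rw [key]
      have h2 : 0 < t - t * g t + 2 * -(ω t)⁻¹ := by nlinarith [hphi_pos t ht]
      exact mul_pos (hω2pos t ht) h2
  have hψ_deriv : ∀ t : ℝ, 0 < t →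
      HasDerivAt (fun s => -(f s / ω s)) (-(f t * (1 - g t))) t := by
    intro t ht
    have h1 := (((hf_diff t (Set.mem_Ioi.mpr ht)).hasDerivAt).div
      (hω_deriv t (Set.mem_Ioi.mpr ht)) (hωne t ht)).neg
    refine h1.congr_deriv ?_
    rw [hgdef]
    rw [show deriv f t * ω t - f t * deriv ω t = f t * ω t ^ 2 - f t * deriv ω t from by
      rw [hderivf t (Set.mem_Ioi.mpr ht)]; ring]
    rw [sub_div, mul_div_cancel_right₀ _ (hω2pos t ht).ne', mul_div_assoc]
    ring
  have hu_deriv : ∀ t : ℝ, 0 < t →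
      HasDerivAt (fun s => -(f s / ω s) / s^2)
        (-(f t * (1 - g t)) / t^2 - 2 * -(f t / ω t) / t^3) t := by
    intro t ht
    have h2 : HasDerivAt (fun s : ℝ => s^2) (2*t) t := by
      simpa using hasDerivAt_pow 2 t
    have h1 := (hψ_deriv t ht).div h2 (pow_ne_zero 2 ht.ne')
    refine h1.congr_deriv ?_
    field_simp [hωne t ht]
  have hFTC : ∀ F F' : ℝ → ℝ, (∀ t : ℝ, 0 < t → HasDerivAt F (F' t) t) →
      ∀ y T : ℝ, 0 < y → y ≤ T → IntervalIntegrable F' MeasureTheory.volume y T →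
      (∫ t in y..T, F' t) = F T - F y := by
    intro F F' hF y T hy hyT hii
    apply intervalIntegral.integral_eq_sub_of_hasDerivAt _ hii
    intro t ht
    rw [Set.uIcc_of_le hyT] at ht
    exact hF t (lt_of_lt_of_le hy ht.1)
  have hg_ii : ∀ y T : ℝ, 0 < y → 0 < T → IntervalIntegrable g MeasureTheory.volume y T :=
    fun y T hy hT => (hdec.mono (hsub_uIcc y T hy hT)).intervalIntegrable
  have hfg_ii : ∀ y T : ℝ, 0 < y → 0 < T →
      IntervalIntegrable (fun t => f t * g t) MeasureTheory.volume y T :=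
    fun y T hy hT => (hg_ii y T hy hT).continuousOn_mul (hf_contOn.mono (hsub_uIcc y T hy hT))
  have hψ'_ii : ∀ y T : ℝ, 0 < y → 0 < T →
      IntervalIntegrable (fun t => -(f t * (1 - g t))) MeasureTheory.volume y T := by
    intro y T hy hT
    have heq : (fun t => -(f t * (1 - g t))) = fun t => f t * g t - f t := by
      funext t; ring
    rw [heq]
    exact (hfg_ii y T hy hT).sub (hf_ii y T hy hT)
  have hu'_ii : ∀ y T : ℝ, 0 < y → 0 < T →
      IntervalIntegrable (fun t => -(f t * (1 - g t)) / t^2 - 2 * -(f t / ω t) / t^3)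
        MeasureTheory.volume y T := by
    intro y T hy hT
    have hsub := hsub_uIcc y T hy hT
    have htpos : ∀ t ∈ Set.uIcc y T, (0:ℝ) < t := fun t ht => hsub ht
    have hc1 : ContinuousOn (fun t : ℝ => f t / t^2) (Set.uIcc y T) := by
      apply (hf_contOn.mono hsub).div ((continuous_pow 2).continuousOn)
      intro t ht
      exact pow_ne_zero 2 (htpos t ht).ne'
    have h1 : IntervalIntegrable (fun t => g t * (f t / t^2)) MeasureTheory.volume y T :=
      (hg_ii y T hy hT).mul_continuousOn hc1
    have hc2 : ContinuousOn (fun t : ℝ => -(f t)/t^2 + 2 * f t / (ω t * t^3)) (Set.uIcc y T) := by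
      apply ContinuousOn.add
      · apply ((hf_contOn.mono hsub).neg).div ((continuous_pow 2).continuousOn)
        intro t ht
        exact pow_ne_zero 2 (htpos t ht).ne'
      · apply ((continuous_const.continuousOn).mul (hf_contOn.mono hsub)).div
          ((hω_contOn.mono hsub).mul ((continuous_pow 3).continuousOn))
        intro t ht
        exact mul_ne_zero (hωne t (htpos t ht)) (pow_ne_zero 3 (htpos t ht).ne')
    have h2 := h1.add hc2.intervalIntegrable
    have heq : (fun t : ℝ => -(f t * (1 - g t)) / t^2 - 2 * -(f t / ω t) / t^3)
        = fun t => g t * (f t / t^2) + (-(f t)/t^2 + 2 * f t / (ω t * t^3)) := by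
      funext t
      rcases eq_or_ne t 0 with h0 | h0
      · simp [h0]
      rcases eq_or_ne (ω t) 0 with hω0 | hω0
      · rw [hgdef]
        simp [hω0]
      · rw [hgdef]
        field_simp
        ring
    rw [heq]
    exact h2
  have hψ_tend : Filter.Tendsto (fun T => -(f T / ω T)) Filter.atTop (nhds 0) := by
    simpa using hlim.neg
  -- Part (a) key inequality
  have hA : ∀ y : ℝ, 0 < y → (1 - g y) * Fbar y ≤ -(f y / ω y) := by
    intro y hy
    have key : ∀ T : ℝ, y ≤ T →
        (1 - g y) * (Fbar y - Fbar T) ≤ -(f y / ω y) - -(f T / ω T) := by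
      intro T hyT
      have hT : 0 < T := lt_of_lt_of_le hy hyT
      have hFTCψ : (∫ t in y..T, -(f t * (1 - g t))) = -(f T / ω T) - -(f y / ω y) :=
        hFTC _ _ hψ_deriv y T hy hyT (hψ'_ii y T hy hT)
      have hint2 : IntervalIntegrable (fun t => f t * (1 - g t)) MeasureTheory.volume y T := by
        have heq : (fun t => f t * (1 - g t)) = fun t => f t - f t * g t := by
          funext t; ring
        rw [heq]
        exact (hf_ii y T hy hT).sub (hfg_ii y T hy hT)
      have hmono1 : (∫ t in y..T, (1 - g y) * f t) ≤ ∫ t in y..T, f t * (1 - g t) := by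
        apply intervalIntegral.integral_mono_on hyT ((hf_ii y T hy hT).const_mul _) hint2
        intro t ht
        have ht0 : 0 < t := lt_of_lt_of_le hy ht.1
        have hgle : g t ≤ g y := hdec (Set.mem_Ioi.mpr hy) (Set.mem_Ioi.mpr ht0) ht.1
        nlinarith [(hf_pos t (Set.mem_Ioi.mpr ht0)).le]
      have e1 : (∫ t in y..T, (1 - g y) * f t) = (1 - g y) * (Fbar y - Fbar T) := by
        rw [intervalIntegral.integral_const_mul, ← hFbar_sub y T hy hyT]
      have e2 : (∫ t in y..T, f t * (1 - g t)) = -(f y / ω y) - -(f T / ω T) := by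
        have h3 : (∫ t in y..T, f t * (1 - g t))
            = -∫ t in y..T, -(f t * (1 - g t)) := by
          rw [← intervalIntegral.integral_neg]
          apply intervalIntegral.integral_congr
          intro t _
          ring
        rw [h3, hFTCψ]
        ring
      rw [← e1, ← e2]
      exact hmono1
    have h1 : Filter.Tendsto (fun T => (1 - g y) * (Fbar y - Fbar T)) Filter.atTop
        (nhds ((1 - g y) * (Fbar y - 0))) :=
      tendsto_const_nhds.mul (tendsto_const_nhds.sub hFbar_tendsto)
    have h2 : Filter.Tendsto (fun T => -(f y / ω y) - -(f T / ω T)) Filter.atTop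
        (nhds (-(f y / ω y) - 0)) := tendsto_const_nhds.sub hψ_tend
    have h3 := le_of_tendsto_of_tendsto h1 h2 ?_
    · simpa using h3
    · filter_upwards [Filter.eventually_ge_atTop y] with T hT
      exact key T hT
  -- Part (b) key inequality
  have hψ_posf : ∀ t : ℝ, 0 < t → 0 < -(f t / ω t) := by
    intro t ht
    rw [neg_pos]
    exact div_neg_of_pos_of_neg (hf_pos t (Set.mem_Ioi.mpr ht)) (hω_neg t ht)
  have hB : ∀ y : ℝ, 0 < y → f y * (2 - y * ω y)
      ≤ Fbar y * (y * (ω y)^2 - y * deriv ω y - 2 * ω y) := by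
    intro y hy
    set S : ℝ → ℝ := fun t => -(f t / ω t) + (-(f t / ω t) / t^2) * q t with hSdef
    have hS_eq : ∀ t : ℝ, 0 < t → S t = f t * (2 - t * ω t) /
        (t * (ω t)^2 - t * deriv ω t - 2 * ω t) := by
      intro t ht
      rw [hSdef]
      simp only [hqdef]
      field_simp [hωne t ht, ht.ne', (hD_pos t ht).ne']
      have hD' : -(deriv ω t * t) + t * ω t ^ 2 - ω t * 2 ≠ 0 ∧ -(t * deriv ω t) + t * ω t ^ 2 - ω t * 2 ≠ 0 := by
        have := (hD_pos t ht).ne'; constructor <;> (contrapose! this; linarith)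
      linear_combination (f t) * mul_inv_cancel₀ hD'.2
    have hS_pos : ∀ t : ℝ, 0 < t → 0 < S t := by
      intro t ht
      rw [hS_eq t ht]
      apply div_pos _ (hD_pos t ht)
      have h1 := hω_neg t ht
      have h2 := hf_pos t (Set.mem_Ioi.mpr ht)
      nlinarith [mul_pos ht (neg_pos.mpr h1)]
    have hS_le3 : ∀ t : ℝ, 0 < t → S t ≤ 3 * -(f t / ω t) := by
      intro t ht
      have hft := hf_pos t (Set.mem_Ioi.mpr ht)
      have hωt := hω_neg t ht
      have hωtneg : 0 < -(ω t) := neg_pos.mpr hωt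
      have hrw : 3 * -(f t / ω t) = 3 * f t / -(ω t) := by
        rw [div_neg, mul_div_assoc]
        ring
      rw [hS_eq t ht, hrw, div_le_div_iff₀ (hD_pos t ht) hωtneg]
      rcases le_or_gt (deriv ω t) 0 with hd | hd
      · have e1 : (2 - t * ω t) * -(ω t) ≤ t * (ω t)^2 - t * deriv ω t - 2 * ω t := by
          nlinarith [mul_nonneg ht.le (neg_nonneg.mpr hd)]
        have e3 : 0 ≤ (2 - t * ω t) * -(ω t) := by nlinarith
        nlinarith [mul_le_mul_of_nonneg_left e1 hft.le,
          mul_nonneg hft.le (hD_pos t ht).le]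
      · have h1 := hphi_ge t ht hd
        have hgt : 0 < g t := by rw [hgdef]; exact div_pos hd (hω2pos t ht)
        have hgeq : deriv ω t = g t * (ω t)^2 := by
          simp only [hgdef]
          exact (div_mul_cancel₀ _ (hω2pos t ht).ne').symm
        have hφeq : -(ω t) = -(ω t)⁻¹ * (ω t)^2 := by
          rw [sq, neg_mul, inv_mul_cancel_left₀ (hωne t ht)]
        have hDa : -(ω t) ≤ t * (ω t)^2 - t * deriv ω t - 2 * ω t := by
          nlinarith [mul_nonneg (hω2pos t ht).le (sub_nonneg.mpr h1),
            mul_pos (hω2pos t ht) ht]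
        have hDb : t * (ω t)^2 ≤ t * (ω t)^2 - t * deriv ω t - 2 * ω t := by
          nlinarith [mul_nonneg (hω2pos t ht).le (sub_nonneg.mpr h1),
            mul_pos (hω2pos t ht) (hphi_pos t ht)]
        nlinarith [mul_le_mul_of_nonneg_left hDa hft.le,
          mul_le_mul_of_nonneg_left hDb hft.le,
          mul_pos (mul_pos ht hft) (mul_pos hωtneg hωtneg)]
    have key : ∀ T : ℝ, y ≤ T → S y - S T ≤ Fbar y - Fbar T := by
      intro T hyT
      have hT : 0 < T := lt_of_lt_of_le hy hyT
      have huT_pos : 0 < -(f T / ω T) / T^2 := div_pos (hψ_posf T hT) (by positivity)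
      have hq_mono : q y ≤ q T := hinc (Set.mem_Ioi.mpr hy) (Set.mem_Ioi.mpr hT) hyT
      have step1 : S y - S T ≤ (-(f y / ω y) - -(f T / ω T))
          + q y * (-(f y / ω y) / y^2 - -(f T / ω T) / T^2) := by
        have h5 : q y * (-(f T / ω T) / T^2) ≤ q T * (-(f T / ω T) / T^2) :=
          mul_le_mul_of_nonneg_right hq_mono huT_pos.le
        simp only [hSdef]
        nlinarith [h5]
      have hFTCψ : (∫ t in y..T, -(f t * (1 - g t))) = -(f T / ω T) - -(f y / ω y) :=
        hFTC _ _ hψ_deriv y T hy hyT (hψ'_ii y T hy hT)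
      have hFTCu : (∫ t in y..T, (-(f t * (1 - g t)) / t^2 - 2 * -(f t / ω t) / t^3))
          = -(f T / ω T) / T^2 - -(f y / ω y) / y^2 :=
        hFTC _ _ hu_deriv y T hy hyT (hu'_ii y T hy hT)
      have hpt : ∀ t ∈ Set.Icc y T,
          q y * -(-(f t * (1 - g t)) / t^2 - 2 * -(f t / ω t) / t^3) ≤ f t * g t := by
        intro t ht
        have ht0 : 0 < t := lt_of_lt_of_le hy ht.1
        have hu'eq : -(-(f t * (1 - g t)) / t^2 - 2 * -(f t / ω t) / t^3)
            = f t * (t * (ω t)^2 - t * deriv ω t - 2 * ω t) / ((ω t)^2 * t^3) := by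
          rw [hgdef]
          field_simp [hωne t ht0]
          ring
        rw [hu'eq]
        have hX : 0 ≤ f t * (t * (ω t)^2 - t * deriv ω t - 2 * ω t) / ((ω t)^2 * t^3) :=
          le_of_lt (div_pos (mul_pos (hf_pos t (Set.mem_Ioi.mpr ht0)) (hD_pos t ht0))
            (mul_pos (hω2pos t ht0) (by positivity)))
        have hq_t : q y ≤ q t := hinc (Set.mem_Ioi.mpr hy) (Set.mem_Ioi.mpr ht0) ht.1
        calc q y * (f t * (t * (ω t)^2 - t * deriv ω t - 2 * ω t) / ((ω t)^2 * t^3))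
            ≤ q t * (f t * (t * (ω t)^2 - t * deriv ω t - 2 * ω t) / ((ω t)^2 * t^3)) :=
              mul_le_mul_of_nonneg_right hq_t hX
          _ = f t * g t := by
              simp only [hqdef, hgdef]
              field_simp [hωne t ht0, ht0.ne', (hD_pos t ht0).ne']
              have hD' : -(deriv ω t * t) + t * ω t ^ 2 - ω t * 2 ≠ 0 ∧ -(t * deriv ω t) + t * ω t ^ 2 - ω t * 2 ≠ 0 := by
                have := (hD_pos t ht0).ne'; constructor <;> (contrapose! this; linarith)
              linear_combination (deriv ω t * f t) * mul_inv_cancel₀ hD'.1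
      have hint1 : (∫ t in y..T, q y * -(-(f t * (1 - g t)) / t^2 - 2 * -(f t / ω t) / t^3))
          ≤ ∫ t in y..T, f t * g t :=
        intervalIntegral.integral_mono_on hyT
          (((hu'_ii y T hy hT).neg).const_mul _) (hfg_ii y T hy hT) hpt
      have hint1' : (∫ t in y..T, q y * -(-(f t * (1 - g t)) / t^2 - 2 * -(f t / ω t) / t^3))
          = q y * (-(f y / ω y) / y^2 - -(f T / ω T) / T^2) := by
        rw [intervalIntegral.integral_const_mul, intervalIntegral.integral_neg, hFTCu]
        ring
      have hsum : (∫ t in y..T, f t * g t) - (∫ t in y..T, -(f t * (1 - g t)))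
          = ∫ t in y..T, f t := by
        rw [← intervalIntegral.integral_sub (hfg_ii y T hy hT) (hψ'_ii y T hy hT)]
        apply intervalIntegral.integral_congr
        intro t _
        ring
      have hf_eq := hFbar_sub y T hy hyT
      calc S y - S T
          ≤ -(f y / ω y) - -(f T / ω T)
            + q y * (-(f y / ω y) / y ^ 2 - -(f T / ω T) / T ^ 2) := step1
        _ = -(f y / ω y) - -(f T / ω T)
            + ∫ t in y..T, q y * -(-(f t * (1 - g t)) / t ^ 2 - 2 * -(f t / ω t) / t ^ 3) := by
              rw [hint1']
        _ ≤ -(f y / ω y) - -(f T / ω T) + ∫ t in y..T, f t * g t := by linarith [hint1]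
        _ = Fbar y - Fbar T := by
              rw [hf_eq, ← hsum, hFTCψ]
              ring
    have hS_tend : Filter.Tendsto S Filter.atTop (nhds 0) := by
      have hh : Filter.Tendsto (fun t : ℝ => 3 * -(f t / ω t)) Filter.atTop (nhds 0) := by
        have h0 := hψ_tend.const_mul (3:ℝ)
        rw [mul_zero] at h0
        exact h0
      apply tendsto_of_tendsto_of_tendsto_of_le_of_le' tendsto_const_nhds hh
      · filter_upwards [Filter.eventually_gt_atTop (0:ℝ)] with t ht
        exact (hS_pos t ht).le
      · filter_upwards [Filter.eventually_gt_atTop (0:ℝ)] with t ht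
        exact hS_le3 t ht
    have h1 : Filter.Tendsto (fun T => S y - S T) Filter.atTop (nhds (S y - 0)) :=
      tendsto_const_nhds.sub hS_tend
    have h2 : Filter.Tendsto (fun T => Fbar y - Fbar T) Filter.atTop (nhds (Fbar y - 0)) :=
      tendsto_const_nhds.sub hFbar_tendsto
    have h3 := le_of_tendsto_of_tendsto h1 h2 ?_
    · have h4 : S y ≤ Fbar y := by simpa using h3
      rw [hS_eq y hy] at h4
      exact (div_le_iff₀ (hD_pos y hy)).mp h4
    · filter_upwards [Filter.eventually_ge_atTop y] with T hT
      exact key T hT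
  -- derivatives of the Mills ratio
  have hm_hasderiv : ∀ x : ℝ, 0 < x → HasDerivAt m (-1 - ω x * m x) x := by
    intro x hx
    have hmem := Set.mem_Ioi.mpr hx
    have h1 := (hFbar_deriv x hx).div ((hf_diff x hmem).hasDerivAt) (hfne x hmem)
    have h2 : HasDerivAt m ((-f x * f x - Fbar x * deriv f x) / f x ^ 2) x :=
      h1.congr_of_eventuallyEq (Filter.Eventually.of_forall (fun y => hm y))
    convert h2 using 1
    rw [hm x, eq_div_iff (pow_ne_zero 2 (hfne x hmem)), hderivf x hmem]
    have h3 : Fbar x / f x * f x = Fbar x := div_mul_cancel₀ _ (hfne x hmem)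
    linear_combination (-(ω x * f x)) * h3
  have hm1_hasderiv : ∀ x : ℝ, 0 < x →
      HasDerivAt (fun s => -1 - ω s * m s)
        (-(deriv ω x * m x + ω x * (-1 - ω x * m x))) x := by
    intro x hx
    have h1 := (hω_deriv x (Set.mem_Ioi.mpr hx)).mul (hm_hasderiv x hx)
    have h2 := (hasDerivAt_const x (-1:ℝ)).sub h1
    refine h2.congr_deriv ?_
    ring
  have hm_deriv_eq : ∀ x : ℝ, 0 < x → deriv m x = -1 - ω x * m x :=
    fun x hx => (hm_hasderiv x hx).deriv
  have hderiv2 : ∀ x : ℝ, 0 < x →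
      deriv (deriv m) x = m x * ((ω x)^2 - deriv ω x) + ω x := by
    intro x hx
    have hev : deriv m =ᶠ[nhds x] (fun s => -1 - ω s * m s) := by
      filter_upwards [isOpen_Ioi.mem_nhds (Set.mem_Ioi.mpr hx)] with s hs
      exact hm_deriv_eq s hs
    rw [hev.deriv_eq, (hm1_hasderiv x hx).deriv]
    ring
  have hm2_nonpos : ∀ x : ℝ, 0 < x → m x * ((ω x)^2 - deriv ω x) + ω x ≤ 0 := by
    intro x hx
    have hA' := hA x hx
    have hω2 := hω2pos x hx
    have hf' := hf_pos x (Set.mem_Ioi.mpr hx)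
    have h1 : ((ω x)^2 - deriv ω x) * Fbar x ≤ -(ω x * f x) := by
      have h0 := mul_le_mul_of_nonneg_right hA' hω2.le
      have e1 : (1 - g x) * Fbar x * (ω x)^2 = ((ω x)^2 - deriv ω x) * Fbar x := by
        simp only [hgdef]
        have h2 : deriv ω x / ω x ^ 2 * ω x ^ 2 = deriv ω x :=
          div_mul_cancel₀ _ (hω2pos x hx).ne'
        linear_combination (-(Fbar x)) * h2
      have e2 : -(f x / ω x) * (ω x)^2 = -(ω x * f x) := by
        have h2 : (ω x)^2 * (ω x)⁻¹ = ω x := by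
          rw [sq]
          exact mul_inv_cancel_right₀ (hωne x hx) (ω x)
        rw [div_eq_mul_inv]
        linear_combination (-(f x)) * h2
      rw [e1] at h0
      rw [e2] at h0
      exact h0
    rw [hm x]
    have h3 : ((ω x)^2 - deriv ω x) * Fbar x / f x ≤ -(ω x * f x) / f x :=
      (div_le_div_iff_of_pos_right hf').mpr h1
    have h4 : -(ω x * f x) / f x = -(ω x) := by
      field_simp
    rw [h4] at h3
    have h5 : Fbar x / f x * ((ω x)^2 - deriv ω x)
        = ((ω x)^2 - deriv ω x) * Fbar x / f x := by
      ring
    linarith [h5.le, h5.ge]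
  have hconc : ConcaveOn ℝ (Set.Ioi 0) m := by
    apply concaveOn_of_deriv2_nonpos' (convex_Ioi 0)
    · intro x hx
      exact (hm_hasderiv x hx).differentiableAt.differentiableWithinAt
    · intro x hx
      have hev : (fun s => -1 - ω s * m s) =ᶠ[nhds x] deriv m := by
        filter_upwards [isOpen_Ioi.mem_nhds hx] with s hs
        exact (hm_deriv_eq s hs).symm
      exact (hev.differentiableAt_iff.mp
        (hm1_hasderiv x hx).differentiableAt).differentiableWithinAt
    · intro x hx
      have h0 : deriv^[2] m x = deriv (deriv m) x := rfl
      rw [h0, hderiv2 x hx]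
      exact hm2_nonpos x hx
  -- the reciprocal composition
  have hinv_deriv : ∀ x : ℝ, 0 < x → HasDerivAt (fun s : ℝ => 1 / s) (-(x^2)⁻¹) x := by
    intro x hx
    simpa [one_div] using hasDerivAt_inv hx.ne'
  have hM_hasderiv : ∀ x : ℝ, 0 < x →
      HasDerivAt (fun s : ℝ => m (1 / s)) ((-1 - ω (1/x) * m (1/x)) * -(x^2)⁻¹) x := by
    intro x hx
    have hy : 0 < 1/x := by positivity
    exact (hm_hasderiv (1/x) hy).comp x (hinv_deriv x hx)
  have hM_deriv_eq : ∀ x : ℝ, 0 < x →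
      deriv (fun s : ℝ => m (1 / s)) x = (-1 - ω (1/x) * m (1/x)) * -(x^2)⁻¹ :=
    fun x hx => (hM_hasderiv x hx).deriv
  have hM1_hasderiv : ∀ x : ℝ, 0 < x →
      HasDerivAt (fun s : ℝ => (-1 - ω (1/s) * m (1/s)) * -(s^2)⁻¹)
        ((-(deriv ω (1/x) * m (1/x) + ω (1/x) * (-1 - ω (1/x) * m (1/x)))) * -(x^2)⁻¹
            * -(x^2)⁻¹
          + (-1 - ω (1/x) * m (1/x)) * (2 * x / (x^2)^2)) x := by
    intro x hx
    have hy : 0 < 1/x := by positivity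
    have h1 : HasDerivAt (fun s : ℝ => -1 - ω (1/s) * m (1/s))
        ((-(deriv ω (1/x) * m (1/x) + ω (1/x) * (-1 - ω (1/x) * m (1/x)))) * -(x^2)⁻¹) x := by
      exact (hm1_hasderiv (1/x) hy).comp x (hinv_deriv x hx)
    have h2 : HasDerivAt (fun s : ℝ => -(s^2)⁻¹) (2 * x / (x^2)^2) x := by
      have h3 : HasDerivAt (fun s : ℝ => s^2) (2*x) x := by
        simpa using hasDerivAt_pow 2 x
      have h4 := (h3.inv (pow_ne_zero 2 hx.ne')).neg
      refine h4.congr_deriv ?_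
      field_simp
    exact h1.mul h2
  have hconv : ConvexOn ℝ (Set.Ioi 0) (fun x : ℝ => m (1 / x)) := by
    apply convexOn_of_deriv2_nonneg' (convex_Ioi 0)
    · intro x hx
      exact (hM_hasderiv x hx).differentiableAt.differentiableWithinAt
    · intro x hx
      have hev : (fun s : ℝ => (-1 - ω (1/s) * m (1/s)) * -(s^2)⁻¹)
          =ᶠ[nhds x] deriv (fun s : ℝ => m (1 / s)) := by
        filter_upwards [isOpen_Ioi.mem_nhds hx] with s hs
        exact (hM_deriv_eq s hs).symm
      exact (hev.differentiableAt_iff.mp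
        (hM1_hasderiv x hx).differentiableAt).differentiableWithinAt
    · intro x hx
      have hx' : (0:ℝ) < x := hx
      have hy : 0 < 1/x := by positivity
      have hev : deriv (fun s : ℝ => m (1 / s))
          =ᶠ[nhds x] (fun s : ℝ => (-1 - ω (1/s) * m (1/s)) * -(s^2)⁻¹) := by
        filter_upwards [isOpen_Ioi.mem_nhds hx] with s hs
        exact hM_deriv_eq s hs
      have h0 : deriv^[2] (fun s : ℝ => m (1 / s)) x
          = deriv (deriv (fun s : ℝ => m (1 / s))) x := rfl
      rw [h0, hev.deriv_eq, (hM1_hasderiv x hx').deriv]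
      have hkey : 0 ≤ (1/x) * (m (1/x) * ((ω (1/x))^2 - deriv ω (1/x)) + ω (1/x))
          + 2 * (-1 - ω (1/x) * m (1/x)) := by
        have hBy := hB (1/x) hy
        have hfy := hf_pos (1/x) (Set.mem_Ioi.mpr hy)
        have hexp : ((1/x) * (m (1/x) * ((ω (1/x))^2 - deriv ω (1/x)) + ω (1/x))
              + 2 * (-1 - ω (1/x) * m (1/x))) * f (1/x)
            = Fbar (1/x) * ((1/x) * (ω (1/x))^2 - (1/x) * deriv ω (1/x) - 2 * ω (1/x))
              - f (1/x) * (2 - (1/x) * ω (1/x)) := by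
          rw [hm (1/x)]
          field_simp
          ring
        nlinarith [hfy]
      have hfinal : (-(deriv ω (1/x) * m (1/x) + ω (1/x) * (-1 - ω (1/x) * m (1/x))))
            * -(x^2)⁻¹ * -(x^2)⁻¹
          + (-1 - ω (1/x) * m (1/x)) * (2 * x / (x^2)^2)
          = ((1/x) * (m (1/x) * ((ω (1/x))^2 - deriv ω (1/x)) + ω (1/x))
              + 2 * (-1 - ω (1/x) * m (1/x))) / x^3 := by
        field_simp
        ring
      rw [hfinal]
      exact div_nonneg hkey (by positivity)
  exact ⟨hconc, hconv⟩
end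

section
/- Let f : (0,∞) → (0,∞) be a twice differentiable probability density function (∫₀^∞ f(t) dt = 1), with logarithmic derivative ω(x) = f′(x)/f(x), survival function F̄(x) = ∫ₓ^∞ f(t) dt, and Mills ratio m(x) = F̄(x)/f(x). If f(x)/(1 − xω(x)) → 0, x f(x)/(1 − xω(x)) → 0, and f(x)/ω(x) → 0 as x → ∞, the function x ↦ ω′(x)/ω(x)² is strictly increasing on (0,∞), and the function x ↦ (x²ω′(x) − xω(x) + 2)/(xω(x)² − xω′(x) − 2ω(x)) is strictly decreasing on (0,∞), then m is strictly reciprocally concave on (0,∞), i.e., m is strictly convex on (0,∞) and x ↦ m(1/x) is strictly concave on (0,∞). -/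
open Set Filter MeasureTheory intervalIntegral Topology

/-- If `Q` is differentiable on `[y,∞)`, has negative derivative on `(y,∞)`,
and tends to `0` at `∞`, then `Q y > 0`. -/
lemma aux_pos_of_deriv_neg_tendsto_zero {Q : ℝ → ℝ} {y : ℝ}
    (hd : ∀ t ∈ Set.Ici y, DifferentiableAt ℝ Q t)
    (hd' : ∀ t ∈ Set.Ioi y, deriv Q t < 0)
    (hlim : Filter.Tendsto Q Filter.atTop (nhds 0)) : 0 < Q y := by
  have ha : StrictAntiOn Q (Set.Ici y) := by
    apply strictAntiOn_of_deriv_neg (convex_Ici y)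
    · exact fun t ht => (hd t ht).continuousAt.continuousWithinAt
    · intro t ht
      rw [interior_Ici] at ht
      exact hd' t ht
  have hge : 0 ≤ Q (y + 1) := by
    refine le_of_tendsto hlim ?_
    refine Filter.eventually_atTop.2 ⟨y + 2, fun t ht => ?_⟩
    exact (ha (by simp : y + 1 ∈ Set.Ici y) (le_trans (by linarith) ht : y ≤ t)
      (by linarith)).le
  have := ha (le_refl y : y ∈ Set.Ici y) (by simp : y + 1 ∈ Set.Ici y) (by linarith)
  linarith

/-- Dual of `aux_pos_of_deriv_neg_tendsto_zero`. -/
lemma aux_neg_of_deriv_pos_tendsto_zero {Q : ℝ → ℝ} {y : ℝ}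
    (hd : ∀ t ∈ Set.Ici y, DifferentiableAt ℝ Q t)
    (hd' : ∀ t ∈ Set.Ioi y, 0 < deriv Q t)
    (hlim : Filter.Tendsto Q Filter.atTop (nhds 0)) : Q y < 0 := by
  have key : 0 < (-Q) y := by
    apply aux_pos_of_deriv_neg_tendsto_zero (fun t ht => (hd t ht).neg)
    · intro t ht
      rw [deriv.neg]
      simpa using hd' t ht
    · exact (by simpa using hlim.neg : Tendsto (fun x => -Q x) atTop (𝓝 0))
  simpa using key

set_option maxHeartbeats 1000000 in
/-- **Theorem 2(b), strict reciprocal concavity.** Let `f : (0,∞) → (0,∞)` be a twice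
differentiable probability density with logarithmic derivative `ω = f′/f`, survival
function `F̄(x) = ∫ₓ^∞ f`, and Mills ratio `m = F̄/f`. If `f(x)/(1 − xω(x)) → 0`,
`xf(x)/(1 − xω(x)) → 0` and `f(x)/ω(x) → 0` as `x → ∞`, `ω′/ω²` is strictly increasing
on `(0,∞)`, and `x ↦ (x²ω′(x) − xω(x) + 2)/(xω(x)² − xω′(x) − 2ω(x))` is strictly
decreasing on `(0,∞)`, then `m` is strictly reciprocally concave on `(0,∞)`: `m` is
strictly convex on `(0,∞)` and `x ↦ m(1/x)` is strictly concave on `(0,∞)`. -/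
theorem millsRatio_strictly_reciprocally_concave' (f ω Fbar m : ℝ → ℝ)
    (hf_pos : ∀ x ∈ Set.Ioi (0 : ℝ), 0 < f x)
    (hf_diff : ∀ x ∈ Set.Ioi (0 : ℝ), DifferentiableAt ℝ f x)
    (hf_diff2 : ∀ x ∈ Set.Ioi (0 : ℝ), DifferentiableAt ℝ (deriv f) x)
    (hf_pdf : ∫ t in Set.Ioi (0 : ℝ), f t = 1)
    (hω : ∀ x, ω x = deriv f x / f x)
    (hFbar : ∀ x, Fbar x = ∫ t in Set.Ioi x, f t)
    (hm : ∀ x, m x = Fbar x / f x)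
    (hlim1 : Filter.Tendsto (fun x => f x / (1 - x * ω x)) Filter.atTop (nhds 0))
    (hlim2 : Filter.Tendsto (fun x => x * f x / (1 - x * ω x)) Filter.atTop (nhds 0))
    (hlim3 : Filter.Tendsto (fun x => f x / ω x) Filter.atTop (nhds 0))
    (hinc : StrictMonoOn (fun x => deriv ω x / (ω x) ^ 2) (Set.Ioi 0))
    (hdec : StrictAntiOn
      (fun x => (x ^ 2 * deriv ω x - x * ω x + 2) /
        (x * (ω x) ^ 2 - x * deriv ω x - 2 * ω x)) (Set.Ioi 0)) :
    StrictConvexOn ℝ (Set.Ioi 0) m ∧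
      StrictConcaveOn ℝ (Set.Ioi 0) (fun x : ℝ => m (1 / x)) := by
  -- f is integrable on (0,∞)
  have hint : IntegrableOn f (Set.Ioi 0) := by
    by_contra h
    rw [MeasureTheory.integral_undef h] at hf_pdf
    norm_num at hf_pdf
  -- continuity of f on Ioi 0
  have hf_contAt : ∀ x ∈ Set.Ioi (0 : ℝ), ContinuousAt f x :=
    fun x hx => (hf_diff x hx).continuousAt
  have hf_contOn : ContinuousOn f (Set.Ioi 0) :=
    fun x hx => (hf_contAt x hx).continuousWithinAt
  -- ω is differentiable on Ioi 0
  have hω_diff : ∀ x ∈ Set.Ioi (0 : ℝ), DifferentiableAt ℝ ω x := by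
    intro x hx
    have : ω = fun y => deriv f y / f y := funext hω
    rw [this]
    exact (hf_diff2 x hx).div (hf_diff x hx) (hf_pos x hx).ne'
  have hω_contAt : ∀ x ∈ Set.Ioi (0 : ℝ), ContinuousAt ω x :=
    fun x hx => (hω_diff x hx).continuousAt
  -- deriv f = ω * f on Ioi 0
  have hdf : ∀ x ∈ Set.Ioi (0 : ℝ), deriv f x = ω x * f x := by
    intro x hx
    rw [hω x]
    field_simp [(hf_pos x hx).ne']
  -- ω < 0 on Ioi 0
  have hω_neg : ∀ x ∈ Set.Ioi (0 : ℝ), ω x < 0 := by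
    intro x₀ hx₀
    by_contra hcon
    push_neg at hcon  -- 0 ≤ ω x₀
    -- there is z ≥ x₀ with ω > 0 on Ioi z
    have hz : ∃ z : ℝ, x₀ ≤ z ∧ ∀ t ∈ Set.Ioi z, 0 < ω t := by
      by_cases hzero : ∃ z, x₀ ≤ z ∧ ω z = 0
      · obtain ⟨z, hzx, hz0⟩ := hzero
        have hzpos : (0:ℝ) < z := lt_of_lt_of_le hx₀ hzx
        refine ⟨z, hzx, ?_⟩
        -- for t > z : ω t ≠ 0 and deriv ω t > 0, so ω strictly increasing past z
        have hrz : deriv ω z / (ω z) ^ 2 = 0 := by rw [hz0]; simp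
        have hne : ∀ t ∈ Set.Ioi z, ω t ≠ 0 := by
          intro t ht h0
          have h1 := hinc (Set.mem_Ioi.2 hzpos) (Set.mem_Ioi.2 (lt_trans hzpos ht)) ht
          simp only at h1
          rw [hrz, h0] at h1
          simp at h1
        have hd : ∀ t ∈ Set.Ioi z, 0 < deriv ω t := by
          intro t ht
          have h1 := hinc (Set.mem_Ioi.2 hzpos) (Set.mem_Ioi.2 (lt_trans hzpos ht)) ht
          simp only at h1
          rw [hrz] at h1
          have h2 : 0 < (ω t) ^ 2 := pow_two_pos_of_ne_zero (hne t ht)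
          have h3 := mul_pos h1 h2
          rwa [div_mul_cancel₀ _ h2.ne'] at h3
        have hmono : StrictMonoOn ω (Set.Ici z) := by
          apply strictMonoOn_of_deriv_pos (convex_Ici z)
          · intro t ht
            have htpos : (0:ℝ) < t := lt_of_lt_of_le hzpos ht
            exact (hω_diff t htpos).continuousAt.continuousWithinAt
          · intro t ht
            rw [interior_Ici] at ht
            exact hd t ht
        intro t ht
        have := hmono (Set.self_mem_Ici) (Set.mem_Ici.2 (le_of_lt ht)) ht
        rwa [hz0] at this
      · push_neg at hzero
        refine ⟨x₀, le_refl _, ?_⟩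
        intro t ht
        rcases lt_trichotomy (ω t) 0 with h | h | h
        · -- IVT: sign change gives a zero
          exfalso
          have hx₀pos : (0:ℝ) < x₀ := hx₀
          have hωx₀ : 0 < ω x₀ := lt_of_le_of_ne hcon (Ne.symm (hzero x₀ (le_refl _)))
          have hcont : ContinuousOn ω (Set.Icc x₀ t) := by
            intro u hu
            exact (hω_contAt u (lt_of_lt_of_le hx₀pos hu.1)).continuousWithinAt
          have h0mem : (0:ℝ) ∈ Set.Icc (ω t) (ω x₀) := ⟨h.le, hωx₀.le⟩
          have := intermediate_value_Icc' (le_of_lt ht) hcont h0mem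
          obtain ⟨z, hzmem, hz0⟩ := this
          exact hzero z hzmem.1 hz0
        · exact absurd h (hzero t (le_of_lt ht))
        · exact h
    obtain ⟨z, hzx, hzpos⟩ := hz
    have hz0 : (0:ℝ) < z := lt_of_lt_of_le hx₀ hzx
    -- f is strictly increasing on Ici z
    have hfmono : StrictMonoOn f (Set.Ici z) := by
      apply strictMonoOn_of_deriv_pos (convex_Ici z)
      · intro t ht
        exact (hf_contAt t (lt_of_lt_of_le hz0 ht)).continuousWithinAt
      · intro t ht
        rw [interior_Ici] at ht
        have htpos : (0:ℝ) < t := lt_trans hz0 ht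
        rw [hdf t htpos]
        exact mul_pos (hzpos t ht) (hf_pos t htpos)
    set c := f (z + 1) with hc
    have hcpos : 0 < c := hf_pos (z+1) (by linarith : (0:ℝ) < z + 1)
    -- f ≥ c on Ioi (z+1), contradicting integrability
    have hIb : IntegrableOn f (Set.Ioi (z+1)) :=
      hint.mono_set (Set.Ioi_subset_Ioi (by linarith))
    have hsub : Set.Ioi (z+1) ⊆ {x | c ≤ f x} := by
      intro t ht
      exact (hfmono (by simp : z + 1 ∈ Set.Ici z) (Set.mem_Ici.2 (by linarith [Set.mem_Ioi.1 ht]))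
        (Set.mem_Ioi.1 ht)).le
    have hfin := hIb.measure_ge_lt_top hcpos
    rw [Measure.restrict_apply₀'] at hfin
    · have : (volume : Measure ℝ) ({x | c ≤ f x} ∩ Set.Ioi (z+1)) = ⊤ := by
        rw [Set.inter_eq_right.2 hsub]
        simp [Real.volume_Ioi]
      rw [this] at hfin
      simp at hfin
    · exact measurableSet_Ioi.nullMeasurableSet
  -- splitting of Fbar
  have hsplit : ∀ x ∈ Set.Ioi (0:ℝ), Fbar x = 1 - ∫ t in (0:ℝ)..x, f t := by
    intro x hx
    have hx0 : (0:ℝ) ≤ x := (Set.mem_Ioi.1 hx).le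
    have hu : Set.Ioc 0 x ∪ Set.Ioi x = Set.Ioi (0:ℝ) := Set.Ioc_union_Ioi_eq_Ioi hx0
    have hsum : (∫ t in Set.Ioc 0 x, f t) + ∫ t in Set.Ioi x, f t = 1 := by
      rw [← hf_pdf, ← hu]
      rw [MeasureTheory.setIntegral_union (Set.Ioc_disjoint_Ioi le_rfl) measurableSet_Ioi
        (hint.mono_set (by rw [← hu]; exact Set.subset_union_left))
        (hint.mono_set (by rw [← hu]; exact Set.subset_union_right))]
    rw [hFbar x, intervalIntegral.integral_of_le hx0]
    linarith
  -- derivative of Fbar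
  have hF_deriv : ∀ x ∈ Set.Ioi (0:ℝ), HasDerivAt Fbar (-(f x)) x := by
    intro x hx
    have hii : IntervalIntegrable f volume 0 x := by
      rw [intervalIntegrable_iff]
      exact hint.mono_set (by
        rw [Set.uIoc_of_le (Set.mem_Ioi.1 hx).le]
        exact Set.Ioc_subset_Ioi_self)
    have hmeas := ContinuousOn.stronglyMeasurableAtFilter (μ := volume) isOpen_Ioi hf_contOn x hx
    have h1 : HasDerivAt (fun u => ∫ t in (0:ℝ)..u, f t) (f x) x :=
      intervalIntegral.integral_hasDerivAt_right hii hmeas (hf_contAt x hx)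
    have h2 : HasDerivAt (fun u => 1 - ∫ t in (0:ℝ)..u, f t) (-(f x)) x := by
      simpa using (h1.const_sub 1)
    apply h2.congr_of_eventuallyEq
    filter_upwards [isOpen_Ioi.mem_nhds hx] with u hu
    exact hsplit u hu
  -- Fbar tends to 0
  have hF_lim : Filter.Tendsto Fbar Filter.atTop (nhds 0) := by
    have h1 : Filter.Tendsto (fun b => ∫ t in (0:ℝ)..b, f t) Filter.atTop (nhds 1) := by
      have := MeasureTheory.intervalIntegral_tendsto_integral_Ioi (0:ℝ) hint tendsto_id
      rwa [hf_pdf] at this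
    have h2 : Filter.Tendsto (fun b => 1 - ∫ t in (0:ℝ)..b, f t) Filter.atTop (nhds 0) := by
      have := (tendsto_const_nhds (x := (1:ℝ)) (f := Filter.atTop (α := ℝ))).sub h1
      simpa using this
    apply h2.congr'
    filter_upwards [Filter.eventually_gt_atTop 0] with u hu
    exact (hsplit u hu).symm
  -- Fbar is positive
  have hF_pos : ∀ x ∈ Set.Ioi (0:ℝ), 0 < Fbar x := by
    intro x hx
    have hxpos : (0:ℝ) < x := hx
    have hu : Set.Ioc x (x+1) ∪ Set.Ioi (x+1) = Set.Ioi x := Set.Ioc_union_Ioi_eq_Ioi (by linarith)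
    have hi1 : IntegrableOn f (Set.Ioc x (x+1)) :=
      hint.mono_set (fun t ht => lt_trans hxpos ht.1)
    have hi2 : IntegrableOn f (Set.Ioi (x+1)) :=
      hint.mono_set (Set.Ioi_subset_Ioi (by linarith))
    rw [hFbar x, ← hu, MeasureTheory.setIntegral_union (Set.Ioc_disjoint_Ioi le_rfl)
      measurableSet_Ioi hi1 hi2]
    have hpos1 : 0 < ∫ t in Set.Ioc x (x+1), f t := by
      rw [← intervalIntegral.integral_of_le (by linarith : x ≤ x + 1)]
      apply intervalIntegral.intervalIntegral_pos_of_pos_on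
      · rw [intervalIntegrable_iff, Set.uIoc_of_le (by linarith : x ≤ x+1)]
        exact hi1
      · exact fun t ht => hf_pos t (lt_trans hxpos ht.1)
      · linarith
    have hpos2 : 0 ≤ ∫ t in Set.Ioi (x+1), f t :=
      MeasureTheory.setIntegral_nonneg measurableSet_Ioi
        (fun t ht => (hf_pos t (by simp at ht ⊢; linarith)).le)
    linarith
  -- first derivative of m
  have hm_deriv : ∀ x ∈ Set.Ioi (0:ℝ), HasDerivAt m (-1 - ω x * m x) x := by
    intro x hx
    have hfx := (hf_pos x hx).ne'
    have h1 : HasDerivAt (fun y => Fbar y / f y)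
        ((-(f x) * f x - Fbar x * deriv f x) / (f x)^2) x :=
      (hF_deriv x hx).div ((hf_diff x hx).hasDerivAt) hfx
    have hmeq : m = fun y => Fbar y / f y := funext hm
    have h3 : HasDerivAt m ((-(f x) * f x - Fbar x * deriv f x) / (f x)^2) x := by
      rw [hmeq]; exact h1
    have h2 : (-(f x) * f x - Fbar x * deriv f x) / (f x)^2 = -1 - ω x * m x := by
      rw [hω x, hm x]
      field_simp
    rw [h2] at h3
    exact h3
  -- derivative of the first-derivative formula
  have hm1_deriv : ∀ x ∈ Set.Ioi (0:ℝ), HasDerivAt (fun u => -1 - ω u * m u)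
      (ω x + ((ω x)^2 - deriv ω x) * m x) x := by
    intro x hx
    have h1 : HasDerivAt (fun u => ω u * m u)
        (deriv ω x * m x + ω x * (-1 - ω x * m x)) x :=
      ((hω_diff x hx).hasDerivAt).mul (hm_deriv x hx)
    have h2 : HasDerivAt (fun u => -1 - ω u * m u)
        (-(deriv ω x * m x + ω x * (-1 - ω x * m x))) x := h1.const_sub (-1)
    convert h2 using 1
    ring
  -- second derivative of m
  have hm2_deriv : ∀ x ∈ Set.Ioi (0:ℝ), HasDerivAt (deriv m)
      (ω x + ((ω x)^2 - deriv ω x) * m x) x := by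
    intro x hx
    apply (hm1_deriv x hx).congr_of_eventuallyEq
    filter_upwards [isOpen_Ioi.mem_nhds hx] with u hu
    exact (hm_deriv u hu).deriv
  -- the key positivity from hinc
  have hQ : ∀ y ∈ Set.Ioi (0:ℝ),
      0 < Fbar y + f y / ω y - (deriv ω y / (ω y)^2) * Fbar y := by
    intro y hy
    set ry := deriv ω y / (ω y)^2 with hry
    apply aux_pos_of_deriv_neg_tendsto_zero
      (Q := fun t => Fbar t + f t / ω t - ry * Fbar t)
    · intro t ht
      have htpos : (0:ℝ) < t := lt_of_lt_of_le hy ht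
      have hωt := (hω_neg t htpos).ne
      exact (((hF_deriv t htpos).differentiableAt.add
        ((hf_diff t htpos).div (hω_diff t htpos) hωt)).sub
        (((hF_deriv t htpos).differentiableAt.const_mul ry)))
    · intro t ht
      have htpos : (0:ℝ) < t := lt_trans hy ht
      have hωt := (hω_neg t htpos).ne
      have hD : HasDerivAt (fun t => Fbar t + f t / ω t - ry * Fbar t)
          ((-(f t)) + (deriv f t * ω t - f t * deriv ω t) / (ω t)^2 - ry * (-(f t))) t :=
        ((hF_deriv t htpos).add (((hf_diff t htpos).hasDerivAt).div
          ((hω_diff t htpos).hasDerivAt) hωt)).sub ((hF_deriv t htpos).const_mul ry)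
      rw [hD.deriv]
      have heq : (-(f t)) + (deriv f t * ω t - f t * deriv ω t) / (ω t)^2 - ry * (-(f t))
          = f t * (ry - deriv ω t / (ω t)^2) := by
        rw [hdf t htpos]
        field_simp
        ring
      rw [heq]
      apply mul_neg_of_pos_of_neg (hf_pos t htpos)
      have := hinc hy (Set.mem_Ioi.2 htpos) ht
      simp only at this
      rw [← hry] at this
      linarith
    · have h := (hF_lim.add hlim3).sub (hF_lim.const_mul ry)
      simpa using h
  -- consequences: ω' < ω² and positivity of the second derivative of m
  have h1r : ∀ y ∈ Set.Ioi (0:ℝ), deriv ω y < (ω y)^2 := by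
    intro y hy
    have hq := hQ y hy
    have hw := hω_neg y hy
    have hw2 : (0:ℝ) < (ω y)^2 := pow_two_pos_of_ne_zero hw.ne
    have hA := hF_pos y hy
    have hB := hf_pos y hy
    have heq : Fbar y + f y / ω y - (deriv ω y / (ω y)^2) * Fbar y
        = (Fbar y * (ω y)^2 + f y * ω y - deriv ω y * Fbar y) / (ω y)^2 := by
      rw [eq_div_iff hw2.ne']
      field_simp [hw.ne]
    rw [heq] at hq
    have hnum : 0 < Fbar y * (ω y)^2 + f y * ω y - deriv ω y * Fbar y := by
      by_contra hc
      push_neg at hc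
      nlinarith [div_nonpos_of_nonpos_of_nonneg hc hw2.le]
    nlinarith [mul_pos hB (neg_pos.2 hw)]
  have hm''pos : ∀ y ∈ Set.Ioi (0:ℝ), 0 < ω y + ((ω y)^2 - deriv ω y) * m y := by
    intro y hy
    have hq := hQ y hy
    have hw := hω_neg y hy
    have hw2 : (0:ℝ) < (ω y)^2 := pow_two_pos_of_ne_zero hw.ne
    have hA := hF_pos y hy
    have hB := hf_pos y hy
    have heq : Fbar y + f y / ω y - (deriv ω y / (ω y)^2) * Fbar y
        = (Fbar y * (ω y)^2 + f y * ω y - deriv ω y * Fbar y) / (ω y)^2 := by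
      rw [eq_div_iff hw2.ne']
      field_simp [hw.ne]
    rw [heq] at hq
    have hnum : 0 < Fbar y * (ω y)^2 + f y * ω y - deriv ω y * Fbar y := by
      by_contra hc
      push_neg at hc
      nlinarith [div_nonpos_of_nonpos_of_nonneg hc hw2.le]
    rw [hm y]
    have heq2 : ω y + ((ω y)^2 - deriv ω y) * (Fbar y / f y)
        = (f y * ω y + ((ω y)^2 - deriv ω y) * Fbar y) / f y := by
      field_simp
    rw [heq2]
    apply div_pos (by nlinarith) hB
  -- the key negativity from hdec
  have hden : ∀ t ∈ Set.Ioi (0:ℝ), 0 < t * (ω t)^2 - t * deriv ω t - 2 * ω t := by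
    intro t ht
    have h1 := h1r t ht
    have h2 := hω_neg t ht
    have ht0 : (0:ℝ) < t := ht
    nlinarith
  have hD : ∀ t ∈ Set.Ioi (0:ℝ), 0 < 1 - t * ω t := by
    intro t ht
    have h2 := hω_neg t ht
    have ht0 : (0:ℝ) < t := ht
    nlinarith
  have hK3 : ∀ y ∈ Set.Ioi (0:ℝ),
      2 * (-1 - ω y * m y) + y * (ω y + ((ω y)^2 - deriv ω y) * m y) < 0 := by
    intro y hy
    have hy0 : (0:ℝ) < y := hy
    set sy := (y ^ 2 * deriv ω y - y * ω y + 2) /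
        (y * (ω y) ^ 2 - y * deriv ω y - 2 * ω y) with hsy
    -- the comparison function
    have hPy : Fbar y - y * f y / (1 - y * ω y) - sy * (f y / (1 - y * ω y)) < 0 := by
      apply aux_neg_of_deriv_pos_tendsto_zero
        (Q := fun t => Fbar t - t * f t / (1 - t * ω t) - sy * (f t / (1 - t * ω t)))
      · intro t ht
        have htpos : (0:ℝ) < t := lt_of_lt_of_le hy0 ht
        have hDt := (hD t htpos).ne'
        have hden_diff : DifferentiableAt ℝ (fun t => 1 - t * ω t) t :=
          (differentiableAt_const 1).sub (differentiableAt_id.mul (hω_diff t htpos))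
        exact ((hF_deriv t htpos).differentiableAt.sub
          ((differentiableAt_id.mul (hf_diff t htpos)).div hden_diff hDt)).sub
          (((hf_diff t htpos).div hden_diff hDt).const_mul sy)
      · intro t ht
        have htpos : (0:ℝ) < t := lt_trans hy0 ht
        have hDt := hD t htpos
        have hA : HasDerivAt (fun u => u * f u) (1 * f t + t * deriv f t) t :=
          (hasDerivAt_id t).mul (hf_diff t htpos).hasDerivAt
        have hDen : HasDerivAt (fun u => 1 - u * ω u) (-(1 * ω t + t * deriv ω t)) t := by
          simpa using ((hasDerivAt_id t).mul (hω_diff t htpos).hasDerivAt).const_sub 1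
        have h1 : HasDerivAt (fun u => u * f u / (1 - u * ω u))
            (((1 * f t + t * deriv f t) * (1 - t * ω t) -
              t * f t * -(1 * ω t + t * deriv ω t)) / (1 - t * ω t) ^ 2) t :=
          hA.div hDen hDt.ne'
        have h2 : HasDerivAt (fun u => f u / (1 - u * ω u))
            ((deriv f t * (1 - t * ω t) - f t * -(1 * ω t + t * deriv ω t)) /
              (1 - t * ω t) ^ 2) t :=
          (hf_diff t htpos).hasDerivAt.div hDen hDt.ne'
        have hP : HasDerivAt
            (fun u => Fbar u - u * f u / (1 - u * ω u) - sy * (f u / (1 - u * ω u)))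
            (-(f t) - (((1 * f t + t * deriv f t) * (1 - t * ω t) -
              t * f t * -(1 * ω t + t * deriv ω t)) / (1 - t * ω t) ^ 2) -
             sy * ((deriv f t * (1 - t * ω t) - f t * -(1 * ω t + t * deriv ω t)) /
              (1 - t * ω t) ^ 2)) t :=
          ((hF_deriv t htpos).sub h1).sub (h2.const_mul sy)
        rw [hP.deriv]
        have hkey : -(f t) - (((1 * f t + t * deriv f t) * (1 - t * ω t) -
              t * f t * -(1 * ω t + t * deriv ω t)) / (1 - t * ω t) ^ 2) -
             sy * ((deriv f t * (1 - t * ω t) - f t * -(1 * ω t + t * deriv ω t)) /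
              (1 - t * ω t) ^ 2)
            = (f t / (1 - t * ω t) ^ 2) *
              (sy * (t * (ω t) ^ 2 - t * deriv ω t - 2 * ω t) -
               (t ^ 2 * deriv ω t - t * ω t + 2)) := by
          rw [hdf t htpos]
          field_simp
          ring
        rw [hkey]
        apply mul_pos (div_pos (hf_pos t htpos) (pow_pos hDt 2))
        have hst := hdec hy (Set.mem_Ioi.2 htpos) ht
        simp only at hst
        rw [← hsy] at hst
        have hnum_eq : t ^ 2 * deriv ω t - t * ω t + 2
            = ((t ^ 2 * deriv ω t - t * ω t + 2) /
              (t * (ω t) ^ 2 - t * deriv ω t - 2 * ω t)) *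
              (t * (ω t) ^ 2 - t * deriv ω t - 2 * ω t) :=
          (div_mul_cancel₀ _ (hden t htpos).ne').symm
        rw [hnum_eq]
        have := mul_pos (sub_pos.2 hst) (hden t htpos)
        nlinarith [this]
      · have h := (hF_lim.sub hlim2).sub (hlim1.const_mul sy)
        simpa using h
    -- translate hPy into the goal
    have hB := hf_pos y hy
    have hA := hF_pos y hy
    have hDy := hD y hy
    have hdeny := hden y hy
    have h6 : (Fbar y - y * f y / (1 - y * ω y) - sy * (f y / (1 - y * ω y))) *
        ((1 - y * ω y) * (y * (ω y) ^ 2 - y * deriv ω y - 2 * ω y)) < 0 :=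
      mul_neg_of_neg_of_pos hPy (mul_pos hDy hdeny)
    have h7 : (Fbar y - y * f y / (1 - y * ω y) - sy * (f y / (1 - y * ω y))) *
        ((1 - y * ω y) * (y * (ω y) ^ 2 - y * deriv ω y - 2 * ω y))
        = Fbar y * (1 - y * ω y) * (y * (ω y) ^ 2 - y * deriv ω y - 2 * ω y)
          - y * f y * (y * (ω y) ^ 2 - y * deriv ω y - 2 * ω y)
          - (y ^ 2 * deriv ω y - y * ω y + 2) * f y := by
      rw [hsy]
      field_simp [hDy.ne']
      rw [mul_sub _ _ (_ / _), mul_div_cancel₀ _ (by intro h; apply hdeny.ne'; linear_combination h)]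
      ring
    rw [h7] at h6
    -- divide by D and then by B
    have h8 : Fbar y * (y * (ω y) ^ 2 - y * deriv ω y - 2 * ω y) < (2 - y * ω y) * f y := by
      nlinarith [hDy]
    have heq : 2 * (-1 - ω y * m y) + y * (ω y + ((ω y)^2 - deriv ω y) * m y)
        = (Fbar y * (y * (ω y) ^ 2 - y * deriv ω y - 2 * ω y) - (2 - y * ω y) * f y) / f y := by
      rw [hm y, eq_div_iff hB.ne']
      field_simp
      ring
    rw [heq]
    exact div_neg_of_neg_of_pos (by linarith) hB
  constructor
  · -- strict convexity of m
    apply strictConvexOn_of_deriv2_pos (convex_Ioi 0)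
    · exact fun x hx => (hm_deriv x hx).differentiableAt.continuousAt.continuousWithinAt
    · intro x hx
      rw [interior_Ioi] at hx
      have h2 : deriv^[2] m = deriv (deriv m) := rfl
      rw [h2, (hm2_deriv x hx).deriv]
      exact hm''pos x hx
  · -- strict concavity of x ↦ m (1/x)
    have hinv_mem : ∀ x : ℝ, x ∈ Set.Ioi (0:ℝ) → (1:ℝ)/x ∈ Set.Ioi (0:ℝ) := by
      intro x hx
      have : (0:ℝ) < x := hx
      exact Set.mem_Ioi.2 (by positivity)
    have hg_deriv : ∀ x ∈ Set.Ioi (0:ℝ), HasDerivAt (fun x : ℝ => m (1 / x))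
        ((-1 - ω (1/x) * m (1/x)) * (-(x^2)⁻¹)) x := by
      intro x hx
      have hx0 : (0:ℝ) < x := hx
      have hi : HasDerivAt (fun y : ℝ => 1/y) (-(x^2)⁻¹) x := by
        simpa [one_div] using hasDerivAt_inv hx0.ne'
      exact (hm_deriv (1/x) (hinv_mem x hx)).comp x hi
    have hg1_deriv : ∀ x ∈ Set.Ioi (0:ℝ),
        HasDerivAt (fun u : ℝ => (-1 - ω (1/u) * m (1/u)) * (-(u^2)⁻¹))
        ((ω (1/x) + ((ω (1/x))^2 - deriv ω (1/x)) * m (1/x)) * (-(x^2)⁻¹) * (-(x^2)⁻¹)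
          + (-1 - ω (1/x) * m (1/x)) * (2 * x / (x^2)^2)) x := by
      intro x hx
      have hx0 : (0:ℝ) < x := hx
      have hi : HasDerivAt (fun y : ℝ => 1/y) (-(x^2)⁻¹) x := by
        simpa [one_div] using hasDerivAt_inv hx0.ne'
      have hF1 : HasDerivAt (fun u : ℝ => -1 - ω (1/u) * m (1/u))
          ((ω (1/x) + ((ω (1/x))^2 - deriv ω (1/x)) * m (1/x)) * (-(x^2)⁻¹)) x := by
        exact (hm1_deriv (1/x) (hinv_mem x hx)).comp x hi
      have hF2 : HasDerivAt (fun u : ℝ => -((u^2)⁻¹)) (2 * x / (x^2)^2) x := by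
        have h1 : HasDerivAt (fun u : ℝ => u^2) ((2:ℕ) * x^1) x := hasDerivAt_pow 2 x
        have h2 := (h1.inv (pow_ne_zero 2 hx0.ne')).neg
        convert h2 using 1 <;> try rfl
        push_cast
        ring
      exact hF1.mul hF2
    have hg2_deriv : ∀ x ∈ Set.Ioi (0:ℝ),
        HasDerivAt (deriv (fun x : ℝ => m (1 / x)))
        ((ω (1/x) + ((ω (1/x))^2 - deriv ω (1/x)) * m (1/x)) * (-(x^2)⁻¹) * (-(x^2)⁻¹)
          + (-1 - ω (1/x) * m (1/x)) * (2 * x / (x^2)^2)) x := by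
      intro x hx
      apply (hg1_deriv x hx).congr_of_eventuallyEq
      filter_upwards [isOpen_Ioi.mem_nhds hx] with u hu
      exact (hg_deriv u hu).deriv
    apply strictConcaveOn_of_deriv2_neg (convex_Ioi 0)
    · exact fun x hx => (hg_deriv x hx).differentiableAt.continuousAt.continuousWithinAt
    · intro x hx
      rw [interior_Ioi] at hx
      have hx0 : (0:ℝ) < x := hx
      have h2 : deriv^[2] (fun x : ℝ => m (1 / x)) = deriv (deriv (fun x : ℝ => m (1 / x))) := rfl
      rw [h2, (hg2_deriv x hx).deriv]
      have hx3 : (0:ℝ) < x^3 := by positivity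
      have heq : (ω (1/x) + ((ω (1/x))^2 - deriv ω (1/x)) * m (1/x)) * (-(x^2)⁻¹) * (-(x^2)⁻¹)
          + (-1 - ω (1/x) * m (1/x)) * (2 * x / (x^2)^2)
          = (2 * (-1 - ω (1/x) * m (1/x)) +
              (1/x) * (ω (1/x) + ((ω (1/x))^2 - deriv ω (1/x)) * m (1/x))) / x^3 := by
        rw [eq_div_iff hx3.ne']
        field_simp [hx0.ne']
        ring
      rw [heq]
      exact div_neg_of_neg_of_pos (hK3 (1/x) (hinv_mem x hx)) hx3
end

section
/- For 0 < α ≤ 1, the Mills ratio m(·; α) of the gamma distribution is reciprocally convex on (0,∞): m(·; α) is concave on (0,∞) and x ↦ m(1/x; α) is convex on (0,∞). -/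
open MeasureTheory Set Real

/-- The Mills ratio of the gamma distribution with shape parameter `α`:
`m(x; α) = Γ(α, x)/(x^(α−1) e^(−x))`, where `Γ(α, x) = ∫ₓ^∞ t^(α−1) e^(−t) dt` is the
upper incomplete gamma function. -/
noncomputable def gammaMills (α x : ℝ) : ℝ :=
  (∫ t in Set.Ioi x, t ^ (α - 1) * Real.exp (-t)) / (x ^ (α - 1) * Real.exp (-x))

lemma gammaMills_repr {α x : ℝ} (hx : 0 < x) :
    gammaMills α x = ∫ s in Set.Ioi (0:ℝ), (x / (x + s)) ^ (1 - α) * Real.exp (-s) := by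
  have h1 : (∫ t in Set.Ioi x, t ^ (α - 1) * Real.exp (-t))
      = ∫ s in Set.Ioi (0:ℝ), (s + x) ^ (α - 1) * Real.exp (-(s + x)) := by
    have h := (measurableEmbedding_addRight x).setIntegral_map (μ := volume)
      (fun t => t ^ (α - 1) * Real.exp (-t)) (Set.Ioi x)
    rw [map_add_right_eq_self volume x] at h
    rw [h]; congr 1; ext s; simp [lt_add_iff_pos_left]
  have h2 : ∀ s ∈ Set.Ioi (0:ℝ),
      (s + x) ^ (α - 1) * Real.exp (-(s + x))
        = ((x / (x + s)) ^ (1 - α) * Real.exp (-s)) * (x ^ (α - 1) * Real.exp (-x)) := by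
    intro s hs
    have hs : 0 < s := hs
    have hxs : 0 < x + s := by linarith
    have ha : (0:ℝ) < x / (x + s) := div_pos hx hxs
    have key : (x / (x + s)) ^ (1 - α) * x ^ (α - 1) = (s + x) ^ (α - 1) := by
      have h3 : (x / (x + s)) ^ (1 - α) = ((x + s) / x) ^ (α - 1) := by
        rw [show (1 - α : ℝ) = -(α - 1) by ring, Real.rpow_neg ha.le,
          ← Real.inv_rpow ha.le, inv_div]
      rw [h3, Real.div_rpow hxs.le hx.le]
      field_simp
      rw [add_comm]
    rw [show -(s + x) = -s + -x by ring, Real.exp_add, ← key]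
    ring
  rw [gammaMills, h1, setIntegral_congr_fun measurableSet_Ioi h2]
  rw [integral_mul_const, mul_div_assoc, div_self (by positivity), mul_one]

/-- Integrability helper: any measurable `u` with `0 ≤ u ≤ 1` on `Ioi 0` gives an
integrable `u^(1-α) * exp(-s)`. -/
lemma integrable_aux {α : ℝ} (hα : α ≤ 1) {u : ℝ → ℝ} (hu : Measurable u)
    (h0 : ∀ s ∈ Set.Ioi (0:ℝ), 0 ≤ u s) (h1 : ∀ s ∈ Set.Ioi (0:ℝ), u s ≤ 1) :
    IntegrableOn (fun s => (u s) ^ (1 - α) * Real.exp (-s)) (Set.Ioi 0) := by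
  have hint : IntegrableOn (fun s : ℝ => Real.exp (-s)) (Set.Ioi 0) := by
    simpa using exp_neg_integrableOn_Ioi 0 one_pos
  have hm1 : Measurable fun s : ℝ => (u s) ^ (1 - α) := by measurability
  have hmeas : Measurable (fun s => (u s) ^ (1 - α) * Real.exp (-s)) :=
    hm1.mul (Real.measurable_exp.comp measurable_neg)
  refine Integrable.mono hint hmeas.aestronglyMeasurable ?_
  · rw [ae_restrict_iff' measurableSet_Ioi]
    filter_upwards with s hs
    have h0' := h0 s hs
    have h1' := h1 s hs
    have hle : (u s) ^ (1 - α) ≤ 1 := Real.rpow_le_one h0' h1' (by linarith)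
    have hnn : 0 ≤ (u s) ^ (1 - α) := Real.rpow_nonneg h0' _
    rw [Real.norm_eq_abs, Real.norm_eq_abs, abs_of_nonneg (by positivity),
      abs_of_nonneg (Real.exp_pos _).le]
    nlinarith [Real.exp_pos (-s)]

/-- Pointwise concavity of `x ↦ (x/(x+s))^(1-α)` on `Ioi 0` for `s ≥ 0`, `0 < α ≤ 1`. -/
lemma concave_pt {α s : ℝ} (hα₀ : 0 < α) (hα₁ : α ≤ 1) (hs : 0 ≤ s) :
    ConcaveOn ℝ (Set.Ioi 0) (fun x : ℝ => (x / (x + s)) ^ (1 - α)) := by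
  have hg : ConcaveOn ℝ (Set.Ioi 0) (fun x : ℝ => x / (x + s)) := by
    have hconv : ConvexOn ℝ (Set.Ioi 0) (fun x : ℝ => s * (x + s)⁻¹) := by
      have h1 : ConvexOn ℝ (Set.Ioi 0) (fun x : ℝ => (x + s)⁻¹) := by
        have hinv : ConvexOn ℝ (Set.Ioi 0) (fun x : ℝ => x⁻¹) := by
          have := (strictConvexOn_zpow (m := -1) (by decide) (by decide)).convexOn
          simpa [zpow_neg_one] using this
        refine ⟨convex_Ioi 0, fun x hx y hy a b ha hb hab => ?_⟩
        dsimp only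
        have hx' : (0:ℝ) < x := hx
        have hy' : (0:ℝ) < y := hy
        have h := hinv.2 (Set.mem_Ioi.2 (by linarith : (0:ℝ) < x + s))
          (Set.mem_Ioi.2 (by linarith : (0:ℝ) < y + s)) ha hb hab
        simp only [smul_eq_mul] at h ⊢
        have heq : a * (x + s) + b * (y + s) = a * x + b * y + s := by
          linear_combination s * hab
        rw [heq] at h
        exact h
      exact h1.smul hs
    have heq : ∀ x ∈ Set.Ioi (0:ℝ), x / (x + s) = 1 - s * (x + s)⁻¹ := by
      intro x hx
      have hx : 0 < x := hx
      have : x + s ≠ 0 := by positivity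
      field_simp
      ring
    refine ⟨convex_Ioi 0, fun x hx y hy a b ha hb hab => ?_⟩
    have hmem : a • x + b • y ∈ Set.Ioi (0:ℝ) := (convex_Ioi 0) hx hy ha hb hab
    dsimp only
    rw [heq _ hx, heq _ hy, heq _ hmem]
    have := hconv.2 hx hy ha hb hab
    simp only [smul_eq_mul] at this ⊢
    nlinarith
  -- compose with concave increasing rpow
  have hrpow := Real.concaveOn_rpow (by linarith : (0:ℝ) ≤ 1 - α) (by linarith : (1:ℝ) - α ≤ 1)
  refine ⟨convex_Ioi 0, fun x hx y hy a b ha hb hab => ?_⟩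
  have hmem : a • x + b • y ∈ Set.Ioi (0:ℝ) := (convex_Ioi 0) hx hy ha hb hab
  dsimp only
  have gx : (0:ℝ) ≤ x / (x + s) := by
    have hx : 0 < x := hx; positivity
  have gy : (0:ℝ) ≤ y / (y + s) := by
    have hy : 0 < y := hy; positivity
  have step1 : a • (x / (x + s)) + b • (y / (y + s))
      ≤ (a • x + b • y) / ((a • x + b • y) + s) := hg.2 hx hy ha hb hab
  have step2 : (a • (x / (x + s)) + b • (y / (y + s))) ^ (1 - α)
      ≤ ((a • x + b • y) / ((a • x + b • y) + s)) ^ (1 - α) := by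
    apply Real.rpow_le_rpow (by positivity) step1 (by linarith)
  have step3 : a • (x / (x + s)) ^ (1 - α) + b • (y / (y + s)) ^ (1 - α)
      ≤ (a • (x / (x + s)) + b • (y / (y + s))) ^ (1 - α) :=
    hrpow.2 gx gy ha hb hab
  exact le_trans step3 step2

/-- Pointwise convexity of `x ↦ (1/(1+s*x))^(1-α)` on `Ioi 0` for `s ≥ 0`, `α ≤ 1`. -/
lemma convex_pt {α s : ℝ} (hα₁ : α ≤ 1) (hs : 0 ≤ s) :
    ConvexOn ℝ (Set.Ioi 0) (fun x : ℝ => (1 / (1 + s * x)) ^ (1 - α)) := by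
  have hrep : ∀ x ∈ Set.Ioi (0:ℝ),
      (1 / (1 + s * x)) ^ (1 - α) = Real.exp ((α - 1) * Real.log (1 + s * x)) := by
    intro x hx
    have hx : 0 < x := hx
    have hpos : (0:ℝ) < 1 + s * x := by positivity
    rw [Real.rpow_def_of_pos (by positivity), one_div, Real.log_inv]
    ring_nf
  refine ⟨convex_Ioi 0, fun x hx y hy a b ha hb hab => ?_⟩
  have hmem : a • x + b • y ∈ Set.Ioi (0:ℝ) := (convex_Ioi 0) hx hy ha hb hab
  dsimp only
  rw [hrep _ hx, hrep _ hy, hrep _ hmem]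
  have hx' : 0 < x := hx
  have hy' : 0 < y := hy
  have hpx : (0:ℝ) < 1 + s * x := by positivity
  have hpy : (0:ℝ) < 1 + s * y := by positivity
  -- log concavity
  have hlog : a * Real.log (1 + s * x) + b * Real.log (1 + s * y)
      ≤ Real.log (1 + s * (a • x + b • y)) := by
    have h := (strictConcaveOn_log_Ioi.concaveOn).2 (Set.mem_Ioi.2 hpx)
      (Set.mem_Ioi.2 hpy) ha hb hab
    simp only [smul_eq_mul] at h ⊢
    have heq : a * (1 + s * x) + b * (1 + s * y) = 1 + s * (a * x + b * y) := by
      have : a + b = 1 := hab; nlinarith [this]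
    rw [heq] at h
    exact h
  -- multiply by (α - 1) ≤ 0 flips
  have hmul : (α - 1) * Real.log (1 + s * (a • x + b • y))
      ≤ a * ((α - 1) * Real.log (1 + s * x)) + b * ((α - 1) * Real.log (1 + s * y)) := by
    have hneg : α - 1 ≤ 0 := by linarith
    nlinarith [hlog]
  -- exp convexity and monotonicity
  calc Real.exp ((α - 1) * Real.log (1 + s * (a • x + b • y)))
      ≤ Real.exp (a * ((α - 1) * Real.log (1 + s * x))
          + b * ((α - 1) * Real.log (1 + s * y))) := Real.exp_le_exp.2 hmul
    _ ≤ a * Real.exp ((α - 1) * Real.log (1 + s * x))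
          + b * Real.exp ((α - 1) * Real.log (1 + s * y)) := by
        have := convexOn_exp.2 (Set.mem_univ ((α - 1) * Real.log (1 + s * x)))
          (Set.mem_univ ((α - 1) * Real.log (1 + s * y))) ha hb hab
        simpa using this
    _ = a • Real.exp ((α - 1) * Real.log (1 + s * x))
          + b • Real.exp ((α - 1) * Real.log (1 + s * y)) := by simp [smul_eq_mul]

/-- For `0 < α ≤ 1`, the Mills ratio `m(·; α)` of the gamma distribution is reciprocally
convex on `(0,∞)`: `m(·; α)` is concave on `(0,∞)` and `x ↦ m(1/x; α)` is convex on
`(0,∞)`. -/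
theorem gammaMills_reciprocally_convex (α : ℝ) (hα₀ : 0 < α) (hα₁ : α ≤ 1) :
    ConcaveOn ℝ (Set.Ioi 0) (gammaMills α) ∧
      ConvexOn ℝ (Set.Ioi 0) (fun x : ℝ => gammaMills α (1 / x)) := by
  have h1α : (0:ℝ) ≤ 1 - α := by linarith
  -- integrability for the concave part
  have hIc : ∀ x : ℝ, 0 < x →
      IntegrableOn (fun s => (x / (x + s)) ^ (1 - α) * Real.exp (-s)) (Set.Ioi 0) := by
    intro x hx
    refine integrable_aux hα₁ (measurable_const.div (measurable_const.add measurable_id))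
      (fun s hs => ?_) (fun s hs => ?_)
    · have hs : 0 < s := hs; positivity
    · have hs : 0 < s := hs
      rw [div_le_one (by positivity)]; linarith
  constructor
  · refine ⟨convex_Ioi 0, fun x hx y hy a b ha hb hab => ?_⟩
    have hx' : 0 < x := hx
    have hy' : 0 < y := hy
    have hmem : a • x + b • y ∈ Set.Ioi (0:ℝ) := (convex_Ioi 0) hx hy ha hb hab
    have hz' : 0 < a • x + b • y := hmem
    rw [gammaMills_repr hx', gammaMills_repr hy', gammaMills_repr hz']
    simp only [smul_eq_mul]
    rw [← integral_const_mul, ← integral_const_mul,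
      ← integral_add (((hIc x hx').const_mul a)) (((hIc y hy').const_mul b))]
    refine setIntegral_mono_on
      (((hIc x hx').const_mul a).add ((hIc y hy').const_mul b))
      (hIc _ hz') measurableSet_Ioi (fun s hs => ?_)
    have hs : 0 < s := hs
    have hpt := (concave_pt hα₀ hα₁ hs.le).2 hx hy ha hb hab
    simp only [smul_eq_mul] at hpt
    calc a * ((x / (x + s)) ^ (1 - α) * Real.exp (-s))
          + b * ((y / (y + s)) ^ (1 - α) * Real.exp (-s))
        = (a * (x / (x + s)) ^ (1 - α) + b * (y / (y + s)) ^ (1 - α)) * Real.exp (-s) := by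
          ring
      _ ≤ ((a * x + b * y) / (a * x + b * y + s)) ^ (1 - α) * Real.exp (-s) := by
          exact mul_le_mul_of_nonneg_right hpt (Real.exp_pos _).le
  · -- convex part
    have hrepr : ∀ x : ℝ, 0 < x → gammaMills α (1 / x)
        = ∫ s in Set.Ioi (0:ℝ), (1 / (1 + s * x)) ^ (1 - α) * Real.exp (-s) := by
      intro x hx
      rw [gammaMills_repr (by positivity : (0:ℝ) < 1 / x)]
      refine setIntegral_congr_fun measurableSet_Ioi (fun s hs => ?_)
      have hs : 0 < s := hs
      have h1 : (1:ℝ) / x / (1 / x + s) = 1 / (1 + s * x) := by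
        rw [div_div, one_div, one_div]
        field_simp
      rw [h1]
    have hIv : ∀ x : ℝ, 0 < x →
        IntegrableOn (fun s => (1 / (1 + s * x)) ^ (1 - α) * Real.exp (-s)) (Set.Ioi 0) := by
      intro x hx
      refine integrable_aux hα₁
        (measurable_const.div (measurable_const.add (measurable_id.mul measurable_const)))
        (fun s hs => ?_) (fun s hs => ?_)
      · have hs : 0 < s := hs; positivity
      · have hs : 0 < s := hs
        rw [div_le_one (by positivity)]; nlinarith
    refine ⟨convex_Ioi 0, fun x hx y hy a b ha hb hab => ?_⟩
    have hx' : 0 < x := hx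
    have hy' : 0 < y := hy
    have hmem : a • x + b • y ∈ Set.Ioi (0:ℝ) := (convex_Ioi 0) hx hy ha hb hab
    have hz' : 0 < a • x + b • y := hmem
    dsimp only
    rw [hrepr x hx', hrepr y hy', hrepr _ hz']
    simp only [smul_eq_mul]
    rw [← integral_const_mul, ← integral_const_mul,
      ← integral_add (((hIv x hx').const_mul a)) (((hIv y hy').const_mul b))]
    refine setIntegral_mono_on (hIv _ hz')
      (((hIv x hx').const_mul a).add ((hIv y hy').const_mul b))
      measurableSet_Ioi (fun s hs => ?_)
    have hs : 0 < s := hs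
    have hpt := (convex_pt hα₁ hs.le).2 hx hy ha hb hab
    simp only [smul_eq_mul] at hpt
    calc (1 / (1 + s * (a * x + b * y))) ^ (1 - α) * Real.exp (-s)
        ≤ (a * (1 / (1 + s * x)) ^ (1 - α) + b * (1 / (1 + s * y)) ^ (1 - α))
            * Real.exp (-s) := mul_le_mul_of_nonneg_right hpt (Real.exp_pos _).le
      _ = a * ((1 / (1 + s * x)) ^ (1 - α) * Real.exp (-s))
            + b * ((1 / (1 + s * y)) ^ (1 - α) * Real.exp (-s)) := by ring
end

section
/- For the Mills ratio m(·; α) of the gamma distribution, the function x ↦ x² m′(x; α) is decreasing on (0,∞) if 1 ≤ α ≤ 2 and increasing on (0,∞) if 0 < α ≤ 1 or α ≥ 2; equivalently, x ↦ m(1/x; α) is concave on (0,∞) if 1 ≤ α ≤ 2 and convex on (0,∞) if 0 < α ≤ 1 or α ≥ 2. -/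
open Set MeasureTheory Filter

namespace GammaMillsAux

lemma integrableOn_gamma {α x : ℝ} (hα : 0 < α) (hx : 0 ≤ x) :
    IntegrableOn (fun t : ℝ => t ^ (α - 1) * Real.exp (-t)) (Set.Ioi x) := by
  have h2 : IntegrableOn (fun t : ℝ => t ^ (α - 1) * Real.exp (-t)) (Set.Ioi 0) :=
    (Real.GammaIntegral_convergent hα).congr_fun (fun t _ => mul_comm _ _) measurableSet_Ioi
  exact h2.mono_set (Set.Ioi_subset_Ioi hx)

lemma preimage_addRight_Ioi (x : ℝ) : (fun u : ℝ => u + x) ⁻¹' Set.Ioi x = Set.Ioi 0 := by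
  ext u; simp [lt_add_iff_pos_left]

lemma integral_translate (f : ℝ → ℝ) (x : ℝ) :
    (∫ u in Set.Ioi (0 : ℝ), f (u + x)) = ∫ t in Set.Ioi x, f t := by
  have h := (measurePreserving_add_right volume x).setIntegral_preimage_emb
    (MeasurableEquiv.addRight x).measurableEmbedding f (Set.Ioi x)
  rw [preimage_addRight_Ioi] at h
  exact h

lemma integrableOn_translate {f : ℝ → ℝ} {x : ℝ} (hf : IntegrableOn f (Set.Ioi x)) :
    IntegrableOn (fun u : ℝ => f (u + x)) (Set.Ioi 0) := by
  have hmp := (measurePreserving_add_right volume x).restrict_preimage_emb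
    (MeasurableEquiv.addRight x).measurableEmbedding (Set.Ioi x)
  have h := (hmp.integrable_comp_emb (MeasurableEquiv.addRight x).measurableEmbedding).mpr hf
  rw [show ((fun u : ℝ => u + x) ⁻¹' Set.Ioi x : Set ℝ) = Set.Ioi 0 from
    preimage_addRight_Ioi x] at h
  exact h

lemma rep {α x : ℝ} (hα : 0 < α) (hx : 0 < x) :
    gammaMills α x = ∫ u in Set.Ioi (0 : ℝ), (1 + u / x) ^ (α - 1) * Real.exp (-u) := by
  have hd : x ^ (α - 1) * Real.exp (-x) ≠ 0 := by positivity
  have key : ∀ u ∈ Set.Ioi (0 : ℝ),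
      (u + x) ^ (α - 1) * Real.exp (-(u + x))
        = ((1 + u / x) ^ (α - 1) * Real.exp (-u)) * (x ^ (α - 1) * Real.exp (-x)) := by
    intro u hu
    have hu' : (0 : ℝ) < u := hu
    have h0 : (0 : ℝ) ≤ 1 + u / x := by
      have := div_nonneg hu'.le hx.le; linarith
    have h1 : u + x = (1 + u / x) * x := by
      rw [add_mul, one_mul, div_mul_cancel₀ _ hx.ne', add_comm]
    have h2 : Real.exp (-(u + x)) = Real.exp (-u) * Real.exp (-x) := by
      rw [← Real.exp_add]; ring_nf
    rw [h2, h1, Real.mul_rpow h0 hx.le]; ring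
  calc gammaMills α x
      = (∫ u in Set.Ioi (0 : ℝ), (u + x) ^ (α - 1) * Real.exp (-(u + x)))
          / (x ^ (α - 1) * Real.exp (-x)) := by
        rw [gammaMills, integral_translate (fun t => t ^ (α - 1) * Real.exp (-t)) x]
    _ = ((∫ u in Set.Ioi (0 : ℝ), (1 + u / x) ^ (α - 1) * Real.exp (-u))
          * (x ^ (α - 1) * Real.exp (-x))) / (x ^ (α - 1) * Real.exp (-x)) := by
        rw [← MeasureTheory.integral_mul_const]
        exact congrArg (· / (x ^ (α - 1) * Real.exp (-x)))
          (MeasureTheory.setIntegral_congr_fun measurableSet_Ioi key)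
    _ = _ := by field_simp

lemma repG {α y : ℝ} (hα : 0 < α) (hy : 0 < y) :
    gammaMills α (1 / y) = ∫ u in Set.Ioi (0 : ℝ), (1 + u * y) ^ (α - 1) * Real.exp (-u) := by
  rw [rep hα (by positivity)]
  congr 1
  ext u
  rw [div_div_eq_mul_div, div_one]

lemma integrableOn_G {α y : ℝ} (hα : 0 < α) (hy : 0 < y) :
    IntegrableOn (fun u : ℝ => (1 + u * y) ^ (α - 1) * Real.exp (-u)) (Set.Ioi 0) := by
  have hx : (0 : ℝ) < 1 / y := by positivity
  have hyne : y ≠ 0 := hy.ne'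
  have h1 : IntegrableOn
      (fun u : ℝ => (u + 1 / y) ^ (α - 1) * Real.exp (-(u + 1 / y))) (Set.Ioi 0) :=
    integrableOn_translate (f := fun t : ℝ => t ^ (α - 1) * Real.exp (-t)) (x := 1 / y)
      (integrableOn_gamma hα hx.le)
  have h2 : IntegrableOn
      (fun u : ℝ => (u + 1 / y) ^ (α - 1) * Real.exp (-(u + 1 / y))
        * (Real.exp (1 / y) / (1 / y) ^ (α - 1))) (Set.Ioi 0) :=
    h1.mul_const (Real.exp (1 / y) / (1 / y) ^ (α - 1))
  refine h2.congr_fun (fun u hu => ?_) measurableSet_Ioi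
  have hu' : (0 : ℝ) < u := hu
  have h0 : (0 : ℝ) ≤ 1 + u * y := by nlinarith
  have h1' : u + 1 / y = (1 + u * y) * (1 / y) := by
    have h : (1 + u * y) * (1 / y) = 1 / y + u * (y * (1 / y)) := by ring
    rw [h, mul_one_div_cancel hyne, mul_one, add_comm]
  have h2' : Real.exp (-(u + 1 / y)) = Real.exp (-u) * Real.exp (-(1 / y)) := by
    rw [← Real.exp_add]; ring_nf
  have hne : ((1 : ℝ) / y) ^ (α - 1) ≠ 0 := by positivity
  have hexp : Real.exp (-(1 / y)) * Real.exp (1 / y) = 1 := by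
    rw [← Real.exp_add]; simp
  beta_reduce
  rw [h2', h1', Real.mul_rpow h0 hx.le]
  have key : (1 + u * y) ^ (α - 1) * (1 / y) ^ (α - 1)
        * (Real.exp (-u) * Real.exp (-(1 / y))) * (Real.exp (1 / y) / (1 / y) ^ (α - 1))
      = (1 + u * y) ^ (α - 1) * Real.exp (-u) * ((1 / y) ^ (α - 1) / (1 / y) ^ (α - 1))
        * (Real.exp (-(1 / y)) * Real.exp (1 / y)) := by ring
  rw [key, div_self hne, hexp, mul_one, mul_one]

lemma convexOn_rpow_Ioi {p : ℝ} (hp : p ≤ 0 ∨ 1 ≤ p) :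
    ConvexOn ℝ (Set.Ioi (0 : ℝ)) fun s : ℝ => s ^ p := by
  rcases hp with hp | hp
  · have hEq : Set.EqOn (deriv fun s : ℝ => s ^ p) (fun x : ℝ => p * x ^ (p - 1))
        (Set.Ioi 0) := fun x hx => Real.deriv_rpow_const x p
    have hdiff : DifferentiableOn ℝ (fun s : ℝ => s ^ p) (Set.Ioi 0) := fun x hx =>
      (Real.hasDerivAt_rpow_const (p := p) (Or.inl (ne_of_gt (mem_Ioi.mp hx)))).differentiableAt.differentiableWithinAt
    have hdiff' : DifferentiableOn ℝ (fun x : ℝ => p * x ^ (p - 1)) (Set.Ioi 0) := fun x hx =>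
      (((Real.hasDerivAt_rpow_const (p := p - 1)
        (Or.inl (ne_of_gt (mem_Ioi.mp hx)))).const_mul p)).differentiableAt.differentiableWithinAt
    refine convexOn_of_deriv2_nonneg (convex_Ioi 0) hdiff.continuousOn ?_ ?_ ?_
    · rwa [interior_Ioi]
    · rw [interior_Ioi]; exact hdiff'.congr hEq
    · intro x hx
      rw [interior_Ioi] at hx
      have hx' : (0 : ℝ) < x := hx
      have hev : (deriv fun s : ℝ => s ^ p) =ᶠ[nhds x] fun x : ℝ => p * x ^ (p - 1) :=
        Filter.eventuallyEq_of_mem (Ioi_mem_nhds hx') hEq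
      have h2 : deriv^[2] (fun s : ℝ => s ^ p) x
          = deriv (fun x : ℝ => p * x ^ (p - 1)) x := by
        show deriv (deriv fun s : ℝ => s ^ p) x = _
        exact hev.deriv_eq
      rw [h2, deriv_const_mul _ ((Real.hasDerivAt_rpow_const (p := p - 1)
        (Or.inl hx'.ne')).differentiableAt), Real.deriv_rpow_const]
      have : 0 ≤ p * (p - 1) := by nlinarith
      have h3 : (0 : ℝ) ≤ x ^ (p - 1 - 1) := Real.rpow_nonneg hx'.le _
      calc (0:ℝ) ≤ (p * (p - 1)) * x ^ (p - 1 - 1) := mul_nonneg this h3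
        _ = p * ((p - 1) * x ^ (p - 1 - 1)) := by ring
  · exact (convexOn_rpow hp).subset Set.Ioi_subset_Ici_self (convex_Ioi 0)

lemma concaveOn_rpow_Ioi {p : ℝ} (h0 : 0 ≤ p) (h1 : p ≤ 1) :
    ConcaveOn ℝ (Set.Ioi (0 : ℝ)) fun s : ℝ => s ^ p :=
  (Real.concaveOn_rpow h0 h1).subset Set.Ioi_subset_Ici_self (convex_Ioi 0)

lemma convexOn_affine_comp {g : ℝ → ℝ} (hg : ConvexOn ℝ (Set.Ioi (0 : ℝ)) g) {u : ℝ}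
    (hu : 0 ≤ u) : ConvexOn ℝ (Set.Ioi (0 : ℝ)) fun y : ℝ => g (1 + u * y) := by
  refine ⟨convex_Ioi 0, fun y1 hy1 y2 hy2 a b ha hb hab => ?_⟩
  have hy1' : (0 : ℝ) < y1 := hy1
  have hy2' : (0 : ℝ) < y2 := hy2
  have h1 : (0 : ℝ) < 1 + u * y1 := by nlinarith
  have h2 : (0 : ℝ) < 1 + u * y2 := by nlinarith
  have key := hg.2 (mem_Ioi.mpr h1) (mem_Ioi.mpr h2) ha hb hab
  simp only [smul_eq_mul] at key ⊢
  have harg : 1 + u * (a * y1 + b * y2) = a * (1 + u * y1) + b * (1 + u * y2) := by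
    have hb' : b = 1 - a := by linarith
    subst hb'; ring
  rw [harg]; exact key

lemma concaveOn_affine_comp {g : ℝ → ℝ} (hg : ConcaveOn ℝ (Set.Ioi (0 : ℝ)) g) {u : ℝ}
    (hu : 0 ≤ u) : ConcaveOn ℝ (Set.Ioi (0 : ℝ)) fun y : ℝ => g (1 + u * y) := by
  refine ⟨convex_Ioi 0, fun y1 hy1 y2 hy2 a b ha hb hab => ?_⟩
  have hy1' : (0 : ℝ) < y1 := hy1
  have hy2' : (0 : ℝ) < y2 := hy2
  have h1 : (0 : ℝ) < 1 + u * y1 := by nlinarith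
  have h2 : (0 : ℝ) < 1 + u * y2 := by nlinarith
  have key := hg.2 (mem_Ioi.mpr h1) (mem_Ioi.mpr h2) ha hb hab
  simp only [smul_eq_mul] at key ⊢
  have harg : 1 + u * (a * y1 + b * y2) = a * (1 + u * y1) + b * (1 + u * y2) := by
    have hb' : b = 1 - a := by linarith
    subst hb'; ring
  rw [harg]; exact key

lemma convexOn_Gint {α : ℝ} (hα : 0 < α) (hp : α - 1 ≤ 0 ∨ 1 ≤ α - 1) :
    ConvexOn ℝ (Set.Ioi (0 : ℝ))
      fun y : ℝ => ∫ u in Set.Ioi (0 : ℝ), (1 + u * y) ^ (α - 1) * Real.exp (-u) := by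
  refine ⟨convex_Ioi 0, fun y1 hy1 y2 hy2 a b ha hb hab => ?_⟩
  have hz : a • y1 + b • y2 ∈ Set.Ioi (0 : ℝ) := (convex_Ioi 0) hy1 hy2 ha hb hab
  simp only [smul_eq_mul] at hz ⊢
  have I1 := integrableOn_G hα (mem_Ioi.mp hy1)
  have I2 := integrableOn_G hα (mem_Ioi.mp hy2)
  have Iz := integrableOn_G hα (mem_Ioi.mp hz)
  have hpt : ∀ u : ℝ, 0 ≤ u →
      ConvexOn ℝ (Set.Ioi (0 : ℝ)) fun y : ℝ => (1 + u * y) ^ (α - 1) :=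
    fun u hu => convexOn_affine_comp (convexOn_rpow_Ioi hp) hu
  calc (∫ u in Set.Ioi (0 : ℝ), (1 + u * (a * y1 + b * y2)) ^ (α - 1) * Real.exp (-u))
      ≤ ∫ u in Set.Ioi (0 : ℝ),
          (a * ((1 + u * y1) ^ (α - 1) * Real.exp (-u))
            + b * ((1 + u * y2) ^ (α - 1) * Real.exp (-u))) := by
        refine setIntegral_mono_on Iz ((I1.const_mul a).add (I2.const_mul b))
          measurableSet_Ioi (fun u hu => ?_)
        have hu' : (0 : ℝ) < u := hu
        have key := (hpt u hu'.le).2 hy1 hy2 ha hb hab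
        simp only [smul_eq_mul] at key
        have h := mul_le_mul_of_nonneg_right key (Real.exp_nonneg (-u))
        calc (1 + u * (a * y1 + b * y2)) ^ (α - 1) * Real.exp (-u)
            ≤ (a * (1 + u * y1) ^ (α - 1) + b * (1 + u * y2) ^ (α - 1)) * Real.exp (-u) := h
          _ = a * ((1 + u * y1) ^ (α - 1) * Real.exp (-u))
              + b * ((1 + u * y2) ^ (α - 1) * Real.exp (-u)) := by ring
    _ = a * (∫ u in Set.Ioi (0 : ℝ), (1 + u * y1) ^ (α - 1) * Real.exp (-u))
          + b * ∫ u in Set.Ioi (0 : ℝ), (1 + u * y2) ^ (α - 1) * Real.exp (-u) := by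
        rw [MeasureTheory.integral_add (I1.const_mul a) (I2.const_mul b),
          MeasureTheory.integral_const_mul, MeasureTheory.integral_const_mul]

lemma concaveOn_Gint {α : ℝ} (hα : 0 < α) (h1 : 0 ≤ α - 1) (h2 : α - 1 ≤ 1) :
    ConcaveOn ℝ (Set.Ioi (0 : ℝ))
      fun y : ℝ => ∫ u in Set.Ioi (0 : ℝ), (1 + u * y) ^ (α - 1) * Real.exp (-u) := by
  refine ⟨convex_Ioi 0, fun y1 hy1 y2 hy2 a b ha hb hab => ?_⟩
  have hz : a • y1 + b • y2 ∈ Set.Ioi (0 : ℝ) := (convex_Ioi 0) hy1 hy2 ha hb hab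
  simp only [smul_eq_mul] at hz ⊢
  have I1 := integrableOn_G hα (mem_Ioi.mp hy1)
  have I2 := integrableOn_G hα (mem_Ioi.mp hy2)
  have Iz := integrableOn_G hα (mem_Ioi.mp hz)
  have hpt : ∀ u : ℝ, 0 ≤ u →
      ConcaveOn ℝ (Set.Ioi (0 : ℝ)) fun y : ℝ => (1 + u * y) ^ (α - 1) :=
    fun u hu => concaveOn_affine_comp (concaveOn_rpow_Ioi h1 h2) hu
  calc a * (∫ u in Set.Ioi (0 : ℝ), (1 + u * y1) ^ (α - 1) * Real.exp (-u))
          + b * ∫ u in Set.Ioi (0 : ℝ), (1 + u * y2) ^ (α - 1) * Real.exp (-u)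
      = ∫ u in Set.Ioi (0 : ℝ),
          (a * ((1 + u * y1) ^ (α - 1) * Real.exp (-u))
            + b * ((1 + u * y2) ^ (α - 1) * Real.exp (-u))) := by
        rw [MeasureTheory.integral_add (I1.const_mul a) (I2.const_mul b),
          MeasureTheory.integral_const_mul, MeasureTheory.integral_const_mul]
    _ ≤ ∫ u in Set.Ioi (0 : ℝ), (1 + u * (a * y1 + b * y2)) ^ (α - 1) * Real.exp (-u) := by
        refine setIntegral_mono_on ((I1.const_mul a).add (I2.const_mul b)) Iz
          measurableSet_Ioi (fun u hu => ?_)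
        have hu' : (0 : ℝ) < u := hu
        have key := (hpt u hu'.le).2 hy1 hy2 ha hb hab
        simp only [smul_eq_mul] at key
        have h := mul_le_mul_of_nonneg_right key (Real.exp_nonneg (-u))
        calc a * ((1 + u * y1) ^ (α - 1) * Real.exp (-u))
              + b * ((1 + u * y2) ^ (α - 1) * Real.exp (-u))
            = (a * (1 + u * y1) ^ (α - 1) + b * (1 + u * y2) ^ (α - 1)) * Real.exp (-u) := by ring
          _ ≤ (1 + u * (a * y1 + b * y2)) ^ (α - 1) * Real.exp (-u) := h

lemma convexOn_congr {s : Set ℝ} {f g : ℝ → ℝ} (hs : Convex ℝ s) (h : ∀ x ∈ s, f x = g x)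
    (hg : ConvexOn ℝ s g) : ConvexOn ℝ s f := by
  refine ⟨hs, fun x hx y hy a b ha hb hab => ?_⟩
  rw [h _ hx, h _ hy, h _ (hs hx hy ha hb hab)]
  exact hg.2 hx hy ha hb hab

lemma concaveOn_congr {s : Set ℝ} {f g : ℝ → ℝ} (hs : Convex ℝ s) (h : ∀ x ∈ s, f x = g x)
    (hg : ConcaveOn ℝ s g) : ConcaveOn ℝ s f := by
  refine ⟨hs, fun x hx y hy a b ha hb hab => ?_⟩
  rw [h _ hx, h _ hy, h _ (hs hx hy ha hb hab)]
  exact hg.2 hx hy ha hb hab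

lemma convexOn_inv_comp {α : ℝ} (hα : 0 < α) (hp : α ≤ 1 ∨ 2 ≤ α) :
    ConvexOn ℝ (Set.Ioi (0 : ℝ)) fun y : ℝ => gammaMills α (1 / y) := by
  refine convexOn_congr (convex_Ioi 0) (fun y hy => repG hα (mem_Ioi.mp hy)) ?_
  exact convexOn_Gint hα (hp.imp (fun h => by linarith) (fun h => by linarith))

lemma concaveOn_inv_comp {α : ℝ} (h1 : 1 ≤ α) (h2 : α ≤ 2) :
    ConcaveOn ℝ (Set.Ioi (0 : ℝ)) fun y : ℝ => gammaMills α (1 / y) := by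
  have hα : 0 < α := lt_of_lt_of_le one_pos h1
  refine concaveOn_congr (convex_Ioi 0) (fun y hy => repG hα (mem_Ioi.mp hy)) ?_
  exact concaveOn_Gint hα (by linarith) (by linarith)

lemma continuousAt_f {α x : ℝ} (hx : 0 < x) :
    ContinuousAt (fun t : ℝ => t ^ (α - 1) * Real.exp (-t)) x := by
  exact (Real.continuousAt_rpow_const x (α - 1) (Or.inl hx.ne')).mul
    ((Real.continuous_exp.comp continuous_neg).continuousAt)

lemma hasDerivAt_num {α x : ℝ} (hα : 0 < α) (hx : 0 < x) :
    HasDerivAt (fun y : ℝ => ∫ t in Set.Ioi y, t ^ (α - 1) * Real.exp (-t))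
      (-(x ^ (α - 1) * Real.exp (-x))) x := by
  set f : ℝ → ℝ := fun t => t ^ (α - 1) * Real.exp (-t) with hf
  set a : ℝ := x / 2 with hadef
  have ha : 0 < a := by positivity
  have hax : a < x := by rw [hadef]; linarith
  have hint : IntegrableOn f (Set.Ioi a) := integrableOn_gamma hα ha.le
  have hsplit : ∀ y ∈ Set.Ioi a,
      (∫ t in Set.Ioi y, f t) = (∫ t in Set.Ioi a, f t) - ∫ t in a..y, f t := by
    intro y hy
    have hy' : a ≤ y := le_of_lt hy
    rw [intervalIntegral.integral_of_le hy']
    have hsum : (∫ t in Set.Ioi a, f t)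
        = (∫ t in Set.Ioc a y, f t) + ∫ t in Set.Ioi y, f t := by
      rw [← MeasureTheory.setIntegral_union (Set.Ioc_disjoint_Ioi le_rfl) measurableSet_Ioi
        (hint.mono_set Set.Ioc_subset_Ioi_self) (hint.mono_set (Set.Ioi_subset_Ioi hy')),
        Set.Ioc_union_Ioi_eq_Ioi hy']
    rw [hsum]; ring
  have hii : IntervalIntegrable f volume a x := by
    rw [intervalIntegrable_iff_integrableOn_Ioc_of_le hax.le]
    exact hint.mono_set Set.Ioc_subset_Ioi_self
  have hcontOn : ContinuousOn f (Set.Ioi 0) := fun t ht =>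
    (continuousAt_f (mem_Ioi.mp ht)).continuousWithinAt
  have hmeas : StronglyMeasurableAtFilter f (nhds x) volume :=
    ⟨Set.Ioi 0, Ioi_mem_nhds hx, hcontOn.aestronglyMeasurable measurableSet_Ioi⟩
  have hFTC : HasDerivAt (fun y : ℝ => ∫ t in a..y, f t) (f x) x :=
    intervalIntegral.integral_hasDerivAt_right hii hmeas (continuousAt_f hx)
  have hG : HasDerivAt (fun y : ℝ => (∫ t in Set.Ioi a, f t) - ∫ t in a..y, f t) (-(f x)) x := by
    simpa using (hasDerivAt_const x (∫ t in Set.Ioi a, f t)).fun_sub hFTC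
  refine hG.congr_of_eventuallyEq ?_
  exact Filter.eventuallyEq_of_mem (Ioi_mem_nhds hax) hsplit

lemma hasDerivAt_den {α x : ℝ} (hx : 0 < x) :
    HasDerivAt (fun y : ℝ => y ^ (α - 1) * Real.exp (-y))
      ((α - 1) * x ^ (α - 1 - 1) * Real.exp (-x) + x ^ (α - 1) * -Real.exp (-x)) x := by
  have h1 : HasDerivAt (fun y : ℝ => y ^ (α - 1)) ((α - 1) * x ^ (α - 1 - 1)) x :=
    Real.hasDerivAt_rpow_const (Or.inl hx.ne')
  have h2 : HasDerivAt (fun y : ℝ => Real.exp (-y)) (-Real.exp (-x)) x := by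
    simpa [Function.comp_def] using ((Real.hasDerivAt_exp (-x)).comp x (hasDerivAt_neg x))
  exact h1.mul h2

lemma differentiableAt_gammaMills {α x : ℝ} (hα : 0 < α) (hx : 0 < x) :
    DifferentiableAt ℝ (gammaMills α) x := by
  have hd0 : x ^ (α - 1) * Real.exp (-x) ≠ 0 := by positivity
  have h := ((hasDerivAt_num hα hx).div (hasDerivAt_den hx) hd0).differentiableAt
  have heq : gammaMills α = fun y : ℝ =>
      (∫ t in Set.Ioi y, t ^ (α - 1) * Real.exp (-t)) / (y ^ (α - 1) * Real.exp (-y)) := rfl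
  rw [heq]
  exact h

lemma hasDerivAt_inv_comp {α y : ℝ} (hα : 0 < α) (hy : 0 < y) :
    HasDerivAt (fun z : ℝ => gammaMills α (1 / z))
      (deriv (gammaMills α) (1 / y) * -(1 / y ^ 2)) y := by
  have h1 : HasDerivAt (fun z : ℝ => 1 / z) (-(1 / y ^ 2)) y := by
    simpa [one_div] using hasDerivAt_inv hy.ne'
  have h2 := (differentiableAt_gammaMills hα (by positivity : (0 : ℝ) < 1 / y)).hasDerivAt
  exact h2.comp y h1

end GammaMillsAux

open GammaMillsAux in
/-- For the Mills ratio `m(·; α)` of the gamma distribution, the function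
`x ↦ x² m′(x; α)` is decreasing on `(0,∞)` if `1 ≤ α ≤ 2` and increasing on `(0,∞)` if
`0 < α ≤ 1` or `α ≥ 2`; equivalently, `x ↦ m(1/x; α)` is concave on `(0,∞)` if
`1 ≤ α ≤ 2` and convex on `(0,∞)` if `0 < α ≤ 1` or `α ≥ 2`. -/
theorem gammaMills_sq_mul_deriv_monotonicity (α : ℝ) :
    (1 ≤ α → α ≤ 2 →
      AntitoneOn (fun x : ℝ => x ^ 2 * deriv (gammaMills α) x) (Set.Ioi 0) ∧
        ConcaveOn ℝ (Set.Ioi 0) (fun x : ℝ => gammaMills α (1 / x))) ∧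
    (0 < α → (α ≤ 1 ∨ 2 ≤ α) →
      MonotoneOn (fun x : ℝ => x ^ 2 * deriv (gammaMills α) x) (Set.Ioi 0) ∧
        ConvexOn ℝ (Set.Ioi 0) (fun x : ℝ => gammaMills α (1 / x))) := by
  have key : ∀ (hα : 0 < α), ∀ x ∈ Set.Ioi (0 : ℝ),
      x ^ 2 * deriv (gammaMills α) x
        = -(deriv (fun z : ℝ => gammaMills α (1 / z)) (1 / x)) := by
    intro hα x hx
    have hx' : (0 : ℝ) < x := hx
    have hix : (0 : ℝ) < 1 / x := by positivity
    have hd := (hasDerivAt_inv_comp hα hix).deriv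
    rw [hd, one_div_one_div]
    have h1 : (1 : ℝ) / (1 / x) ^ 2 = x ^ 2 := by
      field_simp
    rw [h1]
    ring
  constructor
  · intro h1 h2
    have hα : 0 < α := lt_of_lt_of_le one_pos h1
    have hconc := concaveOn_inv_comp h1 h2
    refine ⟨?_, hconc⟩
    have hdiff : ∀ y ∈ Set.Ioi (0 : ℝ),
        DifferentiableAt ℝ (fun z : ℝ => gammaMills α (1 / z)) y :=
      fun y hy => (hasDerivAt_inv_comp hα (mem_Ioi.mp hy)).differentiableAt
    have hmono := hconc.antitoneOn_deriv hdiff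
    intro x hx y hy hxy
    have hx' : (0 : ℝ) < x := hx
    have hy' : (0 : ℝ) < y := hy
    simp only
    rw [key hα x hx, key hα y hy]
    have hle : 1 / y ≤ 1 / x := by
      apply div_le_div_of_nonneg_left (by norm_num) hx' hxy
    have := hmono (mem_Ioi.mpr (by positivity : (0:ℝ) < 1 / y))
      (mem_Ioi.mpr (by positivity : (0:ℝ) < 1 / x)) hle
    linarith
  · intro hα hp
    have hconv := convexOn_inv_comp hα hp
    refine ⟨?_, hconv⟩
    have hdiff : ∀ y ∈ Set.Ioi (0 : ℝ),
        DifferentiableAt ℝ (fun z : ℝ => gammaMills α (1 / z)) y :=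
      fun y hy => (hasDerivAt_inv_comp hα (mem_Ioi.mp hy)).differentiableAt
    have hmono := hconv.monotoneOn_deriv hdiff
    intro x hx y hy hxy
    have hx' : (0 : ℝ) < x := hx
    have hy' : (0 : ℝ) < y := hy
    simp only
    rw [key hα x hx, key hα y hy]
    have hle : 1 / y ≤ 1 / x := by
      apply div_le_div_of_nonneg_left (by norm_num) hx' hxy
    have := hmono (mem_Ioi.mpr (by positivity : (0:ℝ) < 1 / y))
      (mem_Ioi.mpr (by positivity : (0:ℝ) < 1 / x)) hle
    linarith
end

section
/- For α > 2, both x ↦ m(x; α) and x ↦ m(1/x; α) are convex on (0,∞), where m(·; α) is the Mills ratio of the gamma distribution; consequently, for α > 2 the Mills ratio of the gamma distribution is neither reciprocally convex nor reciprocally concave on (0,∞). -/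
open MeasureTheory Set Real

/-- The auxiliary function `F(c) = ∫_0^∞ (1+uc)^(α-1) e^(-u) du`. -/
noncomputable def gmF (α c : ℝ) : ℝ :=
  ∫ u in Set.Ioi (0:ℝ), (1 + u * c) ^ (α - 1) * Real.exp (-u)

lemma gmF_integrable {α : ℝ} (hα : 2 < α) {c : ℝ} (hc : 0 ≤ c) :
    IntegrableOn (fun u : ℝ => (1 + u * c) ^ (α - 1) * Real.exp (-u)) (Set.Ioi 0) := by
  have hβ : (0:ℝ) < α - 1 := by linarith
  have hmeas : AEStronglyMeasurable (fun u : ℝ => (1 + u * c) ^ (α - 1) * Real.exp (-u))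
      (volume.restrict (Set.Ioi 0)) := by
    apply Continuous.aestronglyMeasurable
    exact ((Real.continuous_rpow_const hβ.le).comp
      (continuous_const.add (continuous_id.mul continuous_const))).mul
      (Real.continuous_exp.comp continuous_neg)
  have hint : IntegrableOn
      (fun u : ℝ => (1+c)^(α-1) * (2:ℝ)^(α-1) * (Real.exp (-u) + u ^ (α-1) * Real.exp (-u)))
      (Set.Ioi 0) := by
    apply Integrable.const_mul
    apply Integrable.add
    · exact (exp_neg_integrableOn_Ioi 0 one_pos).congr_fun (fun u _ => by simp) measurableSet_Ioi
    · have h := Real.GammaIntegral_convergent (s := α) (by linarith)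
      exact h.congr_fun (fun u _ => by ring) measurableSet_Ioi
  refine Integrable.mono' hint hmeas ?_
  filter_upwards [ae_restrict_mem measurableSet_Ioi] with u hu
  have hu0 : (0:ℝ) ≤ u := (le_of_lt hu)
  have h1 : (0:ℝ) ≤ 1 + u * c := by positivity
  rw [Real.norm_eq_abs, abs_of_nonneg (by positivity)]
  have step1 : (1 + u * c) ^ (α-1) ≤ ((1+c)*(1+u)) ^ (α-1) := by
    apply Real.rpow_le_rpow h1 (by nlinarith) hβ.le
  have step2 : ((1+c)*(1+u)) ^ (α-1) = (1+c)^(α-1) * (1+u)^(α-1) :=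
    Real.mul_rpow (by linarith) (by linarith)
  have step3 : (1+u) ^ (α-1) ≤ (2:ℝ)^(α-1) * (1 + u ^ (α-1)) := by
    have hmax : (1:ℝ) + u ≤ 2 * max 1 u := by
      rcases le_total u 1 with h | h
      · simp [max_eq_left h]; linarith
      · simp [max_eq_right h]; linarith
    calc (1+u) ^ (α-1) ≤ (2 * max 1 u) ^ (α-1) :=
          Real.rpow_le_rpow (by linarith) hmax hβ.le
      _ = 2^(α-1) * (max 1 u)^(α-1) := Real.mul_rpow (by norm_num) (le_max_of_le_left zero_le_one)
      _ ≤ 2^(α-1) * (1 + u ^ (α-1)) := by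
          apply mul_le_mul_of_nonneg_left _ (by positivity)
          rcases le_total u 1 with h | h
          · rw [max_eq_left h, Real.one_rpow]
            have : (0:ℝ) ≤ u ^ (α-1) := Real.rpow_nonneg hu0 _
            linarith
          · rw [max_eq_right h]
            have : (0:ℝ) ≤ (1:ℝ) := zero_le_one
            nlinarith [Real.rpow_nonneg hu0 (α-1)]
  have hexp : (0:ℝ) < Real.exp (-u) := Real.exp_pos _
  calc (1 + u * c) ^ (α-1) * Real.exp (-u)
      ≤ ((1+c)^(α-1) * ((2:ℝ)^(α-1) * (1 + u ^ (α-1)))) * Real.exp (-u) := by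
        apply mul_le_mul_of_nonneg_right _ hexp.le
        calc (1 + u * c) ^ (α-1) ≤ (1+c)^(α-1) * (1+u)^(α-1) := step2 ▸ step1
          _ ≤ (1+c)^(α-1) * ((2:ℝ)^(α-1) * (1 + u ^ (α-1))) :=
              mul_le_mul_of_nonneg_left step3 (Real.rpow_nonneg (by linarith) _)
    _ = (1+c)^(α-1) * (2:ℝ)^(α-1) * (Real.exp (-u) + u ^ (α-1) * Real.exp (-u)) := by ring

lemma gammaMills_rep {α : ℝ} (hα : 2 < α) {x : ℝ} (hx : 0 < x) :
    gammaMills α x = gmF α x⁻¹ := by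
  have hβ : (0:ℝ) < α - 1 := by linarith
  unfold gammaMills gmF
  have h1 : (∫ t in Set.Ioi x, t ^ (α-1) * Real.exp (-t))
      = ∫ u in Set.Ioi (0:ℝ), (u + x)^(α-1) * Real.exp (-(u+x)) := by
    have h := (measurePreserving_add_right volume x).setIntegral_preimage_emb
      (MeasurableEquiv.addRight x).measurableEmbedding
      (fun t => t ^ (α-1) * Real.exp (-t)) (Set.Ioi x)
    have hpre : (fun u : ℝ => u + x) ⁻¹' Set.Ioi x = Set.Ioi 0 := by
      ext u; simp
    rw [hpre] at h
    exact h.symm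
  rw [h1, div_eq_iff (by positivity : x ^ (α-1) * Real.exp (-x) ≠ 0)] at *
  rw [← integral_mul_const]
  apply setIntegral_congr_fun measurableSet_Ioi
  intro u hu
  have hu0 : (0:ℝ) < u := hu
  have key : u + x = x * (1 + u * x⁻¹) := by field_simp; ring
  show (u + x) ^ (α-1) * Real.exp (-(u+x)) = (1 + u * x⁻¹) ^ (α-1) * Real.exp (-u) * (x ^ (α-1) * Real.exp (-x))
  rw [key, Real.mul_rpow hx.le (by positivity), show -(x * (1 + u * x⁻¹)) = -u + -x by rw [← key]; ring, Real.exp_add]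
  ring

lemma gmF_convexOn {α : ℝ} (hα : 2 < α) : ConvexOn ℝ (Set.Ici 0) (gmF α) := by
  have hβ1 : (1:ℝ) ≤ α - 1 := by linarith
  refine ⟨convex_Ici 0, ?_⟩
  intro x hx y hy a b ha hb hab
  simp only [smul_eq_mul, mem_Ici] at *
  have key : ∀ u ∈ Set.Ioi (0:ℝ),
      (1 + u * (a*x + b*y)) ^ (α-1) * Real.exp (-u)
        ≤ a * ((1 + u*x)^(α-1) * Real.exp (-u)) + b * ((1 + u*y)^(α-1) * Real.exp (-u)) := by
    intro u hu
    have hu0 : (0:ℝ) ≤ u := le_of_lt hu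
    have h1 : (1:ℝ) + u * (a*x + b*y) = a * (1 + u*x) + b * (1 + u*y) := by
      have : a + b = 1 := hab
      nlinarith [this]
    have h2 := (convexOn_rpow hβ1).2 (mem_Ici.2 (by positivity : (0:ℝ) ≤ 1 + u*x))
      (mem_Ici.2 (by positivity : (0:ℝ) ≤ 1 + u*y)) ha hb hab
    simp only [smul_eq_mul] at h2
    calc (1 + u * (a*x + b*y)) ^ (α-1) * Real.exp (-u)
        ≤ (a * (1 + u*x)^(α-1) + b * (1 + u*y)^(α-1)) * Real.exp (-u) := by
          apply mul_le_mul_of_nonneg_right _ (Real.exp_pos _).le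
          rw [h1]; exact h2
      _ = a * ((1 + u*x)^(α-1) * Real.exp (-u)) + b * ((1 + u*y)^(α-1) * Real.exp (-u)) := by ring
  have hixy : IntegrableOn (fun u : ℝ => (1 + u * (a*x+b*y)) ^ (α-1) * Real.exp (-u)) (Set.Ioi 0) :=
    gmF_integrable hα (by positivity)
  have hix := gmF_integrable hα hx (α := α)
  have hiy := gmF_integrable hα hy (α := α)
  calc gmF α (a*x+b*y)
      ≤ ∫ u in Set.Ioi (0:ℝ),
          (a * ((1 + u*x)^(α-1) * Real.exp (-u)) + b * ((1 + u*y)^(α-1) * Real.exp (-u))) :=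
        setIntegral_mono_on hixy ((hix.const_mul a).add (hiy.const_mul b)) measurableSet_Ioi key
    _ = a * gmF α x + b * gmF α y := by
        rw [integral_add (hix.const_mul a) (hiy.const_mul b), integral_const_mul, integral_const_mul]
        rfl

lemma gmF_monotoneOn {α : ℝ} (hα : 2 < α) : MonotoneOn (gmF α) (Set.Ici 0) := by
  have hβ : (0:ℝ) < α - 1 := by linarith
  intro x hx y hy hxy
  simp only [mem_Ici] at hx hy
  apply setIntegral_mono_on (gmF_integrable hα hx) (gmF_integrable hα hy) measurableSet_Ioi
  intro u hu
  have hu0 : (0:ℝ) ≤ u := le_of_lt hu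
  apply mul_le_mul_of_nonneg_right _ (Real.exp_pos _).le
  exact Real.rpow_le_rpow (by positivity) (by nlinarith) hβ.le

lemma gm_int_strict {f g : ℝ → ℝ} (hf : IntegrableOn f (Set.Ioi 0))
    (hg : IntegrableOn g (Set.Ioi 0)) (h : ∀ u ∈ Set.Ioi (0:ℝ), f u < g u) :
    (∫ u in Set.Ioi (0:ℝ), f u) < ∫ u in Set.Ioi (0:ℝ), g u := by
  have hsub : IntegrableOn (fun u => g u - f u) (Set.Ioi 0) := hg.sub hf
  have hpos : 0 < ∫ u in Set.Ioi (0:ℝ), (g u - f u) := by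
    rw [setIntegral_pos_iff_support_of_nonneg_ae ?_ hsub]
    · refine lt_of_lt_of_le ?_ (measure_mono (fun u hu =>
        Set.mem_inter (by simp [Function.mem_support]; exact sub_ne_zero_of_ne (h u hu).ne') hu))
      simp [Real.volume_Ioi]
    · filter_upwards [ae_restrict_mem measurableSet_Ioi] with u hu
      exact sub_nonneg.2 (h u hu).le
  have := integral_sub hg hf
  rw [this] at hpos
  linarith

lemma gm_inv_combo {x y a b : ℝ} (hx : 0 < x) (hy : 0 < y) (ha : 0 ≤ a) (hb : 0 ≤ b)
    (hab : a + b = 1) : (a*x + b*y)⁻¹ ≤ a * x⁻¹ + b * y⁻¹ := by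
  have h := (strictConvexOn_zpow (m := -1) (by decide) (by decide)).convexOn.2
    (mem_Ioi.2 hx) (mem_Ioi.2 hy) ha hb hab
  simpa [smul_eq_mul, zpow_neg, zpow_one] using h

/-- For `α > 2`, both `x ↦ m(x; α)` and `x ↦ m(1/x; α)` are convex on `(0,∞)`;
consequently, for `α > 2` the Mills ratio of the gamma distribution is neither
reciprocally convex (concave on `(0,∞)` with `m(1/·)` convex) nor reciprocally concave
(convex on `(0,∞)` with `m(1/·)` concave) on `(0,∞)`. -/
theorem gammaMills_neither_reciprocally_convex_nor_concave (α : ℝ) (hα : 2 < α) :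
    ConvexOn ℝ (Set.Ioi 0) (gammaMills α) ∧
      ConvexOn ℝ (Set.Ioi 0) (fun x : ℝ => gammaMills α (1 / x)) ∧
      ¬(ConcaveOn ℝ (Set.Ioi 0) (gammaMills α) ∧
          ConvexOn ℝ (Set.Ioi 0) (fun x : ℝ => gammaMills α (1 / x))) ∧
      ¬(ConvexOn ℝ (Set.Ioi 0) (gammaMills α) ∧
          ConcaveOn ℝ (Set.Ioi 0) (fun x : ℝ => gammaMills α (1 / x))) := by
  have hβ : (0:ℝ) < α - 1 := by linarith
  have hβ1 : (1:ℝ) < α - 1 := by linarith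
  have hconvK := gmF_convexOn hα
  have hmono := gmF_monotoneOn hα
  -- first conjunct
  have c1 : ConvexOn ℝ (Set.Ioi 0) (gammaMills α) := by
    refine ⟨convex_Ioi 0, ?_⟩
    intro x hx y hy a b ha hb hab
    simp only [smul_eq_mul, mem_Ioi] at *
    have hxy : 0 < a*x + b*y := by
      rcases eq_or_lt_of_le ha with h | h
      · rw [← h] at hab ⊢; simp at hab; simpa [hab] using hy
      · nlinarith [mul_nonneg hb hy.le]
    rw [gammaMills_rep hα hxy, gammaMills_rep hα hx, gammaMills_rep hα hy]
    calc gmF α (a*x+b*y)⁻¹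
        ≤ gmF α (a * x⁻¹ + b * y⁻¹) := by
          apply hmono (mem_Ici.2 (by positivity)) (mem_Ici.2 (by positivity))
          exact gm_inv_combo hx hy ha hb hab
      _ ≤ a * gmF α x⁻¹ + b * gmF α y⁻¹ := by
          simpa [smul_eq_mul] using hconvK.2 (mem_Ici.2 (by positivity : (0:ℝ) ≤ x⁻¹))
            (mem_Ici.2 (by positivity : (0:ℝ) ≤ y⁻¹)) ha hb hab
  -- second conjunct
  have hrep2 : ∀ z : ℝ, 0 < z → gammaMills α (1/z) = gmF α z := by
    intro z hz
    rw [one_div, gammaMills_rep hα (inv_pos.2 hz), inv_inv]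
  have c2 : ConvexOn ℝ (Set.Ioi 0) (fun x : ℝ => gammaMills α (1 / x)) := by
    refine ⟨convex_Ioi 0, ?_⟩
    intro x hx y hy a b ha hb hab
    simp only [smul_eq_mul, mem_Ioi] at *
    have hxy : 0 < a*x + b*y := by
      rcases eq_or_lt_of_le ha with h | h
      · rw [← h] at hab ⊢; simp at hab; simpa [hab] using hy
      · nlinarith [mul_nonneg hb hy.le]
    rw [hrep2 _ hxy, hrep2 _ hx, hrep2 _ hy]
    simpa [smul_eq_mul] using hconvK.2 (mem_Ici.2 hx.le) (mem_Ici.2 hy.le) ha hb hab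
  refine ⟨c1, c2, ?_, ?_⟩
  · rintro ⟨hconc, -⟩
    have h2 := hconc.2 (mem_Ioi.2 (by norm_num : (0:ℝ) < 1)) (mem_Ioi.2 (by norm_num : (0:ℝ) < 3))
      (by norm_num : (0:ℝ) ≤ 1/2) (by norm_num : (0:ℝ) ≤ 1/2) (by norm_num)
    simp only [smul_eq_mul] at h2
    norm_num at h2
    -- h2 : 1/2 * gammaMills α 1 + 1/2 * gammaMills α 3 ≤ gammaMills α 2
    rw [gammaMills_rep hα (by norm_num : (0:ℝ) < 2),
      gammaMills_rep hα (by norm_num : (0:ℝ) < 1),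
      gammaMills_rep hα (by norm_num : (0:ℝ) < 3)] at h2
    have hlt : gmF α 2⁻¹ < gmF α (2/3) := by
      apply gm_int_strict (gmF_integrable hα (by norm_num)) (gmF_integrable hα (by norm_num))
      intro u hu
      have hu0 : (0:ℝ) < u := hu
      apply mul_lt_mul_of_pos_right _ (Real.exp_pos _)
      exact Real.rpow_lt_rpow (by positivity) (by linarith) hβ
    have hle : gmF α (2/3) ≤ (1/2) * gmF α 1⁻¹ + (1/2) * gmF α 3⁻¹ := by
      have := hconvK.2 (mem_Ici.2 (by norm_num : (0:ℝ) ≤ 1⁻¹))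
        (mem_Ici.2 (by norm_num : (0:ℝ) ≤ 3⁻¹)) (by norm_num : (0:ℝ) ≤ 1/2)
        (by norm_num : (0:ℝ) ≤ 1/2) (by norm_num)
      simp only [smul_eq_mul] at this
      have hc : (1/2 : ℝ) * 1⁻¹ + (1/2) * 3⁻¹ = 2/3 := by norm_num
      rw [hc] at this
      exact this
    linarith
  · rintro ⟨-, hconc⟩
    have h2 := hconc.2 (mem_Ioi.2 (by norm_num : (0:ℝ) < 1)) (mem_Ioi.2 (by norm_num : (0:ℝ) < 3))
      (by norm_num : (0:ℝ) ≤ 1/2) (by norm_num : (0:ℝ) ≤ 1/2) (by norm_num)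
    simp only [smul_eq_mul] at h2
    norm_num at h2
    rw [hrep2 2 (by norm_num), hrep2 3 (by norm_num),
      show gammaMills α 1 = gammaMills α (1/1) by norm_num, hrep2 1 (by norm_num)] at h2
    have hlt : gmF α 2 < (1/2) * gmF α 1 + (1/2) * gmF α 3 := by
      have hint : (∫ u in Set.Ioi (0:ℝ),
          ((1/2) * ((1 + u*1)^(α-1) * Real.exp (-u)) + (1/2) * ((1 + u*3)^(α-1) * Real.exp (-u))))
          = (1/2) * gmF α 1 + (1/2) * gmF α 3 := by
        rw [integral_add ((gmF_integrable hα (by norm_num : (0:ℝ) ≤ 1)).const_mul _)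
          ((gmF_integrable hα (by norm_num : (0:ℝ) ≤ 3)).const_mul _),
          integral_const_mul, integral_const_mul]
        rfl
      rw [← hint]
      apply gm_int_strict (gmF_integrable hα (by norm_num))
        (((gmF_integrable hα (by norm_num : (0:ℝ) ≤ 1)).const_mul _).add
          ((gmF_integrable hα (by norm_num : (0:ℝ) ≤ 3)).const_mul _))
      intro u hu
      have hu0 : (0:ℝ) < u := hu
      have h3 := (strictConvexOn_rpow hβ1).2 (mem_Ici.2 (by positivity : (0:ℝ) ≤ 1 + u*1))
        (mem_Ici.2 (by positivity : (0:ℝ) ≤ 1 + u*3))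
        (by intro h; simp at h; nlinarith : (1:ℝ) + u*1 ≠ 1 + u*3)
        (by norm_num : (0:ℝ) < 1/2) (by norm_num : (0:ℝ) < 1/2) (by norm_num)
      simp only [smul_eq_mul] at h3
      have hcomb : (1/2 : ℝ) * (1 + u*1) + (1/2) * (1 + u*3) = 1 + u*2 := by ring
      rw [hcomb] at h3
      calc (1 + u*2)^(α-1) * Real.exp (-u)
          < ((1/2) * (1 + u*1)^(α-1) + (1/2) * (1 + u*3)^(α-1)) * Real.exp (-u) :=
            mul_lt_mul_of_pos_right h3 (Real.exp_pos _)
        _ = (1/2) * ((1 + u*1)^(α-1) * Real.exp (-u)) + (1/2) * ((1 + u*3)^(α-1) * Real.exp (-u)) := by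
            ring
    linarith
end
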